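/- arXiv:2109.12760 — 4 statements merged into one kernel-verified Lean document; each statement's English description precedes it below -/
import Mathlib

section
/- The 104 similarities satisfy the non-overlapping/open set condition with the open unit square: the open images F_1(□°), …, F_104(□°) are pairwise disjoint and each is contained in the open unit square □° = (0,1)×(0,1); equivalently, for i ≠ j the intersection F_i(□) ∩ F_j(□) is either a line segment, a single point, or empty. -/
noncomputable section

/-- The plane ℝ² with the Euclidean metric. -/
abbrev Plane : Type := EuclideanSpace ℝ (Fin 2)

/-- The point (s, t) ∈ ℝ². -/
def pt (s t : ℝ) : Plane := WithLp.toLp 2 ![s, t]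

/-- The unit square □ = [0,1] × [0,1]. -/
def unitSq : Set Plane := {z : Plane | z 0 ∈ Set.Icc (0:ℝ) 1 ∧ z 1 ∈ Set.Icc (0:ℝ) 1}

/-- Vertical reflection Γ_v(x₁,x₂) = (x₁, 1-x₂). -/
def Γv : Plane → Plane := fun x => pt (x 0) (1 - x 1)

/-- Horizontal reflection Γ_h(x₁,x₂) = (1-x₁, x₂). -/
def Γh : Plane → Plane := fun x => pt (1 - x 0) (x 1)

/-- Diagonal reflection Γ_{d₁}(x₁,x₂) = (x₂, x₁). -/
def Γd₁ : Plane → Plane := fun x => pt (x 1) (x 0)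

/-- Anti-diagonal reflection Γ_{d₂}(x₁,x₂) = (1-x₂, 1-x₁). -/
def Γd₂ : Plane → Plane := fun x => pt (1 - x 1) (1 - x 0)

/-- Counter-clockwise rotation by π/2 around the center: Γ_{r₁}(x₁,x₂) = (1-x₂, x₁).
    The rotations Γ_{r_j} are `Γr^[j]`, and Γ_{r₄} = `Γr^[4]` = id. -/
def Γr : Plane → Plane := fun x => pt (1 - x 1) (x 0)

/-- The basic contraction ratio a = √(7/24) − 1/2. -/
def aa : ℝ := Real.sqrt (7/24) - 1/2

/-- The maps F_i for 1 ≤ i ≤ 13: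
    F_{2j+1}(x) = a·x + (j/24, 0) (0 ≤ j ≤ 5), F_{2j+2}(x) = a²·x + (a + j/24, 0) (0 ≤ j ≤ 5),
    F_{13}(x) = (1/4)·x + (1/4, 0). -/
def Fbase : ℕ → Plane → Plane := fun i x =>
  if i = 13 then (1/4 : ℝ) • x + pt (1/4) 0
  else if i % 2 = 1 then aa • x + pt ((((i - 1) / 2 : ℕ) : ℝ) / 24) 0
  else aa ^ 2 • x + pt (aa + (((i - 2) / 2 : ℕ) : ℝ) / 24) 0

/-- The maps F_i for 1 ≤ i ≤ 26: F_i = Γ_h ∘ F_{27-i} ∘ Γ_h for 14 ≤ i ≤ 26. -/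
def Fq : ℕ → Plane → Plane := fun i =>
  if i ≤ 13 then Fbase i else Γh ∘ Fbase (27 - i) ∘ Γh

/-- The full iterated function system F_1, …, F_104:
    F_{i+25j} = Γ_{r_j} ∘ F_i ∘ Γ_{r_{4-j}} for 1 ≤ i ≤ 25, 1 ≤ j ≤ 3 (here for
    27 ≤ i ≤ 100 one has j = (i-1)/25 ∈ {1,2,3} and i - 25j ∈ {1,…,25});
    F_{101},…,F_{104} are the four central quarter squares. -/
def Fmap : ℕ → Plane → Plane := fun i =>
  if i ≤ 26 then Fq i
  else if i ≤ 100 then Γr^[(i - 1) / 25] ∘ Fq (i - 25 * ((i - 1) / 25)) ∘ Γr^[4 - (i - 1) / 25]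
  else if i = 101 then fun x => (1/4 : ℝ) • x + pt (1/4) (1/4)
  else if i = 102 then fun x => (1/4 : ℝ) • x + pt (1/2) (1/4)
  else if i = 103 then fun x => (1/4 : ℝ) • x + pt (1/2) (1/2)
  else fun x => (1/4 : ℝ) • x + pt (1/4) (1/2)

/-- The contraction ratio of F_i for 1 ≤ i ≤ 13. -/
def ρbase : ℕ → ℝ := fun i =>
  if i = 13 then 1/4 else if i % 2 = 1 then aa else aa ^ 2

/-- The contraction ratio of F_i for 1 ≤ i ≤ 26. -/
def ρq : ℕ → ℝ := fun i => if i ≤ 13 then ρbase i else ρbase (27 - i)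

/-- The contraction ratio ρ_i of F_i for 1 ≤ i ≤ 104. -/
def rho : ℕ → ℝ := fun i =>
  if i ≤ 26 then ρq i
  else if i ≤ 100 then ρq (i - 25 * ((i - 1) / 25))
  else 1/4

end

/-- The open unit square (0,1)×(0,1). -/
def openUnitSq : Set Plane := {z : Plane | z 0 ∈ Set.Ioo (0:ℝ) 1 ∧ z 1 ∈ Set.Ioo (0:ℝ) 1}

/- ============ auxiliary development ============ -/

noncomputable section Aux

lemma plane_eq {z w : Plane} (h0 : z 0 = w 0) (h1 : z 1 = w 1) : z = w := by
  apply PiLp.ext; intro k; fin_cases k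
  · exact h0
  · exact h1

lemma aa_sq : aa ^ 2 = 1/24 - aa := by
  have hs : Real.sqrt (7/24) ^ 2 = 7/24 := Real.sq_sqrt (by norm_num)
  unfold aa; nlinarith [hs]

lemma aa_lo : (1:ℝ)/25 < aa := by
  have hs : Real.sqrt (7/24) ^ 2 = 7/24 := Real.sq_sqrt (by norm_num)
  have hn : (0:ℝ) ≤ Real.sqrt (7/24) := Real.sqrt_nonneg _
  unfold aa; nlinarith [hs, hn]

lemma aa_hi : aa < 1/24 := by
  have hs : Real.sqrt (7/24) ^ 2 = 7/24 := Real.sq_sqrt (by norm_num)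
  have hn : (0:ℝ) ≤ Real.sqrt (7/24) := Real.sqrt_nonneg _
  unfold aa; nlinarith [hs, hn]

/- integer pairs (p, q) representing p/24 + q·aa -/
abbrev ZP := ℤ × ℤ

def evp (u : ZP) : ℝ := (u.1 : ℝ) / 24 + (u.2 : ℝ) * aa

lemma evp_add (u v : ZP) : evp (u + v) = evp u + evp v := by
  simp [evp, Prod.fst_add, Prod.snd_add]; push_cast; ring

def bnn (u : ZP) : Bool := if 0 ≤ u.2 then decide (0 ≤ 25*u.1 + 24*u.2) else decide (0 ≤ u.1 + u.2)

def bpos (u : ZP) : Bool :=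
  if 0 < u.2 then decide (0 ≤ 25*u.1 + 24*u.2)
  else if u.2 = 0 then decide (0 < u.1) else decide (0 ≤ u.1 + u.2)

lemma bnn_sound {u : ZP} (h : bnn u = true) : 0 ≤ evp u := by
  unfold bnn at h
  split at h
  · rename_i hq
    have h' : (0:ℝ) ≤ 25*u.1 + 24*u.2 := by exact_mod_cast of_decide_eq_true h
    have hq' : (0:ℝ) ≤ u.2 := by exact_mod_cast hq
    have := mul_le_mul_of_nonneg_left aa_lo.le hq'
    unfold evp; nlinarith
  · rename_i hq
    have h' : (0:ℝ) ≤ u.1 + u.2 := by exact_mod_cast of_decide_eq_true h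
    have hq' : (u.2 : ℝ) ≤ 0 := by exact_mod_cast (not_le.1 hq).le
    have := mul_le_mul_of_nonpos_left aa_hi.le hq'
    unfold evp; nlinarith

lemma bpos_sound {u : ZP} (h : bpos u = true) : 0 < evp u := by
  unfold bpos at h
  split at h
  · rename_i hq
    have h' : (0:ℝ) ≤ 25*u.1 + 24*u.2 := by exact_mod_cast of_decide_eq_true h
    have hq' : (0:ℝ) < u.2 := by exact_mod_cast hq
    have := mul_lt_mul_of_pos_left aa_lo hq'
    unfold evp; nlinarith
  · split at h
    · rename_i _ hq
      have h' : (0:ℝ) < u.1 := by exact_mod_cast of_decide_eq_true h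
      unfold evp; rw [hq]; push_cast; nlinarith
    · rename_i hq1 hq2
      have h' : (0:ℝ) ≤ u.1 + u.2 := by exact_mod_cast of_decide_eq_true h
      have hq' : (u.2 : ℝ) < 0 := by
        have : u.2 < 0 := by omega
        exact_mod_cast this
      have := mul_lt_mul_of_neg_left aa_hi hq'
      unfold evp; nlinarith

def bLe (u v : ZP) : Bool := bnn (v - u)
def bLt (u v : ZP) : Bool := bpos (v - u)

lemma evp_sub (u v : ZP) : evp (u - v) = evp u - evp v := by
  simp [evp, Prod.fst_sub, Prod.snd_sub]; push_cast; ring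

lemma bLe_sound {u v : ZP} (h : bLe u v = true) : evp u ≤ evp v := by
  have := bnn_sound h; rw [evp_sub] at this; linarith

lemma bLt_sound {u v : ZP} (h : bLt u v = true) : evp u < evp v := by
  have := bpos_sound h; rw [evp_sub] at this; linarith

def pmax (u v : ZP) : ZP := if bLe u v then v else u
def pmin (u v : ZP) : ZP := if bLe u v then u else v

lemma pmax_cases (u v : ZP) : pmax u v = u ∨ pmax u v = v := by
  unfold pmax; split
  · right; rfl
  · left; rfl

lemma pmin_cases (u v : ZP) : pmin u v = u ∨ pmin u v = v := by
  unfold pmin; split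
  · left; rfl
  · right; rfl

lemma pmax_eq {u v : ZP} (h1 : bLe u (pmax u v) = true) (h2 : bLe v (pmax u v) = true) :
    evp (pmax u v) = max (evp u) (evp v) := by
  refine le_antisymm ?_ (max_le (bLe_sound h1) (bLe_sound h2))
  rcases pmax_cases u v with h | h <;> rw [h]
  · exact le_max_left _ _
  · exact le_max_right _ _

lemma pmin_eq {u v : ZP} (h1 : bLe (pmin u v) u = true) (h2 : bLe (pmin u v) v = true) :
    evp (pmin u v) = min (evp u) (evp v) := by
  refine le_antisymm (le_min (bLe_sound h1) (bLe_sound h2)) ?_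
  rcases pmin_cases u v with h | h <;> rw [h]
  · exact min_le_left _ _
  · exact min_le_right _ _

/- ============ the data tables ============ -/

abbrev Dat := ZP × ZP × ZP  -- (c, d, r) : square [c, c+r] × [d, d+r]

def one2 : ZP := (24, 0)

def dB : ℕ → Dat := fun i =>
  if i = 13 then ((6,0),(0,0),(6,0))
  else if i % 2 = 1 then (((((i-1)/2 : ℕ) : ℤ), 0), (0,0), (0,1))
  else (((((i-2)/2 : ℕ) : ℤ), 1), (0,0), (1,-1))

def conjH' (t : Dat) : Dat := (one2 - t.2.2 - t.1, t.2.1, t.2.2)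
def conjC' (t : Dat) : Dat := (one2 - t.2.2 - t.2.1, t.1, t.2.2)

def dQ : ℕ → Dat := fun i => if i ≤ 13 then dB i else conjH' (dB (27 - i))

def dat : ℕ → Dat := fun i =>
  if i ≤ 26 then dQ i
  else if i ≤ 100 then conjC'^[(i-1)/25] (dQ (i - 25 * ((i-1)/25)))
  else if i = 101 then ((6,0),(6,0),(6,0))
  else if i = 102 then ((12,0),(6,0),(6,0))
  else if i = 103 then ((12,0),(12,0),(6,0))
  else ((6,0),(12,0),(6,0))

/- ============ homotheties and the bridge ============ -/

def hom (r u v : ℝ) : Plane → Plane := fun x => r • x + pt u v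

def homD (t : Dat) : Plane → Plane := hom (evp t.2.2) (evp t.1) (evp t.2.1)

lemma evp_oss (u v : ZP) : evp (one2 - u - v) = 1 - evp u - evp v := by
  simp [evp, one2, Prod.fst_sub, Prod.snd_sub]; push_cast; ring

lemma hom_conjH (r u v : ℝ) : Γh ∘ hom r u v ∘ Γh = hom r (1 - r - u) v := by
  funext x
  refine plane_eq ?_ ?_ <;> simp [Γh, hom, pt] <;> ring

lemma homD_conjH (c d r : ZP) : Γh ∘ homD (c, d, r) ∘ Γh = homD (conjH' (c, d, r)) := by
  funext x
  refine plane_eq ?_ ?_ <;>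
    simp [homD, hom, conjH', one2, evp, pt, Γh, Prod.fst_sub, Prod.snd_sub] <;>
    push_cast <;> ring

lemma hom_conj1 (r u v : ℝ) : Γr^[1] ∘ hom r u v ∘ Γr^[3] = hom r (1 - r - v) u := by
  funext x
  refine plane_eq ?_ ?_ <;>
    simp [Γr, hom, pt, Function.iterate_succ, Function.comp] <;> ring

lemma hom_conj2 (r u v : ℝ) : Γr^[2] ∘ hom r u v ∘ Γr^[2] = hom r (1 - r - u) (1 - r - v) := by
  funext x
  refine plane_eq ?_ ?_ <;>
    simp [Γr, hom, pt, Function.iterate_succ, Function.comp] <;> ring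

lemma hom_conj3 (r u v : ℝ) : Γr^[3] ∘ hom r u v ∘ Γr^[1] = hom r v (1 - r - u) := by
  funext x
  refine plane_eq ?_ ?_ <;>
    simp [Γr, hom, pt, Function.iterate_succ, Function.comp] <;> ring

lemma homD_conj1 (c d r : ZP) : Γr^[1] ∘ homD (c, d, r) ∘ Γr^[3] = homD (conjC' (c, d, r)) := by
  funext x
  refine plane_eq ?_ ?_ <;>
    simp [homD, hom, conjC', one2, evp, pt, Γr, Prod.fst_sub, Prod.snd_sub,
      Function.iterate_succ, Function.comp] <;>
    push_cast <;> ring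

lemma homD_conj2 (c d r : ZP) :
    Γr^[2] ∘ homD (c, d, r) ∘ Γr^[2] = homD (conjC' (conjC' (c, d, r))) := by
  funext x
  refine plane_eq ?_ ?_ <;>
    simp [homD, hom, conjC', one2, evp, pt, Γr, Prod.fst_sub, Prod.snd_sub,
      Function.iterate_succ, Function.comp] <;>
    push_cast <;> ring

lemma homD_conj3 (c d r : ZP) :
    Γr^[3] ∘ homD (c, d, r) ∘ Γr^[1] = homD (conjC' (conjC' (conjC' (c, d, r)))) := by
  funext x
  refine plane_eq ?_ ?_ <;>
    simp [homD, hom, conjC', one2, evp, pt, Γr, Prod.fst_sub, Prod.snd_sub,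
      Function.iterate_succ, Function.comp] <;>
    push_cast <;> ring

lemma L1 (i : ℕ) (h1 : 1 ≤ i) (h2 : i ≤ 13) : Fbase i = homD (dB i) := by
  interval_cases i <;>
    (funext x
     refine plane_eq ?_ ?_ <;>
       simp only [Fbase, dB, homD, hom, evp, pt] <;>
       norm_num <;>
       first
         | exact Or.inl aa_sq
         | linear_combination (x 0) * aa_sq
         | linear_combination (x 1) * aa_sq)

lemma L2 (i : ℕ) (h1 : 1 ≤ i) (h2 : i ≤ 26) : Fq i = homD (dQ i) := by
  by_cases h13 : i ≤ 13
  · unfold Fq dQ; rw [if_pos h13, if_pos h13]; exact L1 i h1 h13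
  · unfold Fq dQ; rw [if_neg h13, if_neg h13, L1 (27 - i) (by omega) (by omega)]
    obtain ⟨c, d, r⟩ := dB (27 - i)
    exact homD_conjH c d r

lemma Fmap_eq (i : ℕ) (h1 : 1 ≤ i) (h104 : i ≤ 104) : Fmap i = homD (dat i) := by
  by_cases h26 : i ≤ 26
  · unfold Fmap dat; rw [if_pos h26, if_pos h26]; exact L2 i h1 h26
  · by_cases h100 : i ≤ 100
    · unfold Fmap dat
      rw [if_neg h26, if_pos h100, if_neg h26, if_pos h100]
      have hb1 : 1 ≤ i - 25 * ((i-1)/25) := by omega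
      have hb2 : i - 25 * ((i-1)/25) ≤ 26 := by omega
      rw [L2 _ hb1 hb2]
      have hj : (i-1)/25 = 1 ∨ (i-1)/25 = 2 ∨ (i-1)/25 = 3 := by omega
      obtain ⟨c, d, r⟩ := dQ (i - 25 * ((i-1)/25))
      rcases hj with h | h | h <;> rw [h]
      · exact homD_conj1 c d r
      · exact homD_conj2 c d r
      · exact homD_conj3 c d r
    · unfold Fmap dat
      rw [if_neg h26, if_neg h100, if_neg h26, if_neg h100]
      interval_cases i <;>
      · norm_num
        funext x
        refine plane_eq ?_ ?_ <;> simp [homD, hom, evp, pt] <;> norm_num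

/- ============ rectangles ============ -/

def RIcc (A B C D : ℝ) : Set Plane := {z | z 0 ∈ Set.Icc A B ∧ z 1 ∈ Set.Icc C D}
def RIoo (A B C D : ℝ) : Set Plane := {z | z 0 ∈ Set.Ioo A B ∧ z 1 ∈ Set.Ioo C D}

lemma hom_image_Icc (r u v : ℝ) (hr : 0 < r) :
    hom r u v '' unitSq = RIcc u (u+r) v (v+r) := by
  ext z
  constructor
  · rintro ⟨x, ⟨⟨a0, a1⟩, b0, b1⟩, rfl⟩
    have e0 : hom r u v x 0 = r * x 0 + u := rfl
    have e1 : hom r u v x 1 = r * x 1 + v := rfl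
    exact ⟨⟨by rw [e0]; nlinarith, by rw [e0]; nlinarith⟩,
      by rw [e1]; nlinarith, by rw [e1]; nlinarith⟩
  · rintro ⟨⟨hz0, hz0'⟩, hz1, hz1'⟩
    refine ⟨pt ((z 0 - u)/r) ((z 1 - v)/r), ⟨⟨?_, ?_⟩, ?_, ?_⟩, ?_⟩
    · exact div_nonneg (by linarith) hr.le
    · show (z 0 - u)/r ≤ 1
      rw [div_le_one hr]; linarith
    · exact div_nonneg (by linarith) hr.le
    · show (z 1 - v)/r ≤ 1
      rw [div_le_one hr]; linarith
    · refine plane_eq ?_ ?_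
      · show r * ((z 0 - u)/r) + u = z 0
        field_simp; ring
      · show r * ((z 1 - v)/r) + v = z 1
        field_simp; ring

lemma hom_image_Ioo (r u v : ℝ) (hr : 0 < r) :
    hom r u v '' openUnitSq = RIoo u (u+r) v (v+r) := by
  ext z
  constructor
  · rintro ⟨x, ⟨⟨a0, a1⟩, b0, b1⟩, rfl⟩
    have e0 : hom r u v x 0 = r * x 0 + u := rfl
    have e1 : hom r u v x 1 = r * x 1 + v := rfl
    exact ⟨⟨by rw [e0]; nlinarith, by rw [e0]; nlinarith⟩,
      by rw [e1]; nlinarith, by rw [e1]; nlinarith⟩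
  · rintro ⟨⟨hz0, hz0'⟩, hz1, hz1'⟩
    refine ⟨pt ((z 0 - u)/r) ((z 1 - v)/r), ⟨⟨?_, ?_⟩, ?_, ?_⟩, ?_⟩
    · exact div_pos (by linarith) hr
    · show (z 0 - u)/r < 1
      rw [div_lt_one hr]; linarith
    · exact div_pos (by linarith) hr
    · show (z 1 - v)/r < 1
      rw [div_lt_one hr]; linarith
    · refine plane_eq ?_ ?_
      · show r * ((z 0 - u)/r) + u = z 0
        field_simp; ring
      · show r * ((z 1 - v)/r) + v = z 1
        field_simp; ring

lemma RIcc_inter (A B C D A' B' C' D' : ℝ) :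
    RIcc A B C D ∩ RIcc A' B' C' D'
      = RIcc (max A A') (min B B') (max C C') (min D D') := by
  ext z
  simp only [RIcc, Set.mem_inter_iff, Set.mem_setOf_eq, Set.mem_Icc, max_le_iff, le_min_iff]
  constructor
  · rintro ⟨⟨⟨a1,a2⟩,⟨b1,b2⟩⟩,⟨⟨c1,c2⟩,⟨d1,d2⟩⟩⟩
    exact ⟨⟨⟨a1,c1⟩,a2,c2⟩,⟨b1,d1⟩,b2,d2⟩
  · rintro ⟨⟨⟨a1,c1⟩,a2,c2⟩,⟨b1,d1⟩,b2,d2⟩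
    exact ⟨⟨⟨a1,a2⟩,b1,b2⟩,⟨c1,c2⟩,d1,d2⟩

lemma RIcc_emptyX {A B C D : ℝ} (h : B < A) : RIcc A B C D = ∅ := by
  ext z; simp only [RIcc, Set.mem_setOf_eq, Set.mem_Icc, Set.mem_empty_iff_false, iff_false]
  rintro ⟨⟨h1, h2⟩, -⟩; linarith

lemma RIcc_emptyY {A B C D : ℝ} (h : D < C) : RIcc A B C D = ∅ := by
  ext z; simp only [RIcc, Set.mem_setOf_eq, Set.mem_Icc, Set.mem_empty_iff_false, iff_false]
  rintro ⟨-, h1, h2⟩; linarith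

lemma RIcc_point {A B C D : ℝ} (hAB : A = B) (hCD : C = D) : RIcc A B C D = {pt A C} := by
  subst hAB; subst hCD
  ext z
  simp only [RIcc, Set.mem_setOf_eq, Set.Icc_self, Set.mem_singleton_iff]
  constructor
  · rintro ⟨h0, h1⟩; exact plane_eq (by simpa [pt] using h0) (by simpa [pt] using h1)
  · rintro rfl; exact ⟨rfl, rfl⟩

lemma pt_ne_of_snd {A C D : ℝ} (h : C ≠ D) : pt A C ≠ pt A D := by
  intro hh
  exact h (by simpa [pt] using congrArg (fun p : Plane => p 1) hh)

lemma pt_ne_of_fst {A B C : ℝ} (h : A ≠ B) : pt A C ≠ pt B C := by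
  intro hh
  exact h (by simpa [pt] using congrArg (fun p : Plane => p 0) hh)

lemma RIcc_segV {A B C D : ℝ} (hAB : A = B) (hCD : C < D) :
    RIcc A B C D = segment ℝ (pt A C) (pt A D) := by
  subst hAB
  rw [segment_eq_image ℝ]
  ext z
  simp only [RIcc, Set.mem_setOf_eq, Set.Icc_self, Set.mem_singleton_iff, Set.mem_image,
    Set.mem_Icc]
  constructor
  · rintro ⟨h0, h1, h2⟩
    refine ⟨(z 1 - C)/(D - C), ⟨div_nonneg (by linarith) (by linarith),
      by rw [div_le_one (by linarith)]; linarith⟩, ?_⟩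
    refine plane_eq ?_ ?_
    · show (1 - (z 1 - C)/(D - C)) * A + ((z 1 - C)/(D - C)) * A = z 0
      rw [h0]; ring
    · show (1 - (z 1 - C)/(D - C)) * C + ((z 1 - C)/(D - C)) * D = z 1
      have hne : D - C ≠ 0 := ne_of_gt (by linarith)
      field_simp
      ring
  · rintro ⟨t, ⟨ht0, ht1⟩, rfl⟩
    have e0 : ((1-t) • pt A C + t • pt A D) 0 = (1-t) * A + t * A := rfl
    have e1 : ((1-t) • pt A C + t • pt A D) 1 = (1-t) * C + t * D := rfl
    rw [e0, e1]
    refine ⟨by ring, by nlinarith, by nlinarith⟩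

lemma RIcc_segH {A B C D : ℝ} (hAB : A < B) (hCD : C = D) :
    RIcc A B C D = segment ℝ (pt A C) (pt B C) := by
  subst hCD
  rw [segment_eq_image ℝ]
  ext z
  simp only [RIcc, Set.mem_setOf_eq, Set.Icc_self, Set.mem_singleton_iff, Set.mem_image,
    Set.mem_Icc]
  constructor
  · rintro ⟨⟨h1, h2⟩, h0⟩
    refine ⟨(z 0 - A)/(B - A), ⟨div_nonneg (by linarith) (by linarith),
      by rw [div_le_one (by linarith)]; linarith⟩, ?_⟩
    refine plane_eq ?_ ?_
    · show (1 - (z 0 - A)/(B - A)) * A + ((z 0 - A)/(B - A)) * B = z 0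
      have hne : B - A ≠ 0 := ne_of_gt (by linarith)
      field_simp
      ring
    · show (1 - (z 0 - A)/(B - A)) * C + ((z 0 - A)/(B - A)) * C = z 1
      rw [h0]; ring
  · rintro ⟨t, ⟨ht0, ht1⟩, rfl⟩
    have e0 : ((1-t) • pt A C + t • pt B C) 0 = (1-t) * A + t * B := rfl
    have e1 : ((1-t) • pt A C + t • pt B C) 1 = (1-t) * C + t * C := rfl
    rw [e0, e1]
    refine ⟨⟨by nlinarith, by nlinarith⟩, by ring⟩

/- ============ the checkers ============ -/

def check1 (i j : ℕ) : Bool :=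
  let t1 := dat i; let t2 := dat j
  bLe (t1.1 + t1.2.2) t2.1 || bLe (t2.1 + t2.2.2) t1.1 ||
  bLe (t1.2.1 + t1.2.2) t2.2.1 || bLe (t2.2.1 + t2.2.2) t1.2.1

def check2 (i : ℕ) : Bool :=
  let t := dat i
  bnn t.1 && bnn t.2.1 && bLe (t.1 + t.2.2) one2 && bLe (t.2.1 + t.2.2) one2 && bpos t.2.2

def check3 (i j : ℕ) : Bool :=
  let t1 := dat i; let t2 := dat j
  let X1 := t1.1; let X1p := t1.1 + t1.2.2; let Y1 := t1.2.1; let Y1p := t1.2.1 + t1.2.2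
  let X2 := t2.1; let X2p := t2.1 + t2.2.2; let Y2 := t2.2.1; let Y2p := t2.2.1 + t2.2.2
  (bLt X1p X2 || bLt X2p X1 || bLt Y1p Y2 || bLt Y2p Y1) ||
  (let mx := pmax X1 X2; let nx := pmin X1p X2p
   let my := pmax Y1 Y2; let ny := pmin Y1p Y2p
   (bLe X1 mx && bLe X2 mx && bLe nx X1p && bLe nx X2p &&
    bLe Y1 my && bLe Y2 my && bLe ny Y1p && bLe ny Y2p) &&
   ((decide (mx = nx) && decide (my = ny)) ||
    (decide (mx = nx) && bLt my ny) ||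
    (decide (my = ny) && bLt mx nx)))

/- shorthand for real bounds -/
def lox (i : ℕ) : ℝ := evp (dat i).1
def hix (i : ℕ) : ℝ := evp ((dat i).1 + (dat i).2.2)
def loy (i : ℕ) : ℝ := evp (dat i).2.1
def hiy (i : ℕ) : ℝ := evp ((dat i).2.1 + (dat i).2.2)

lemma image_Icc_eq (i : ℕ) (h1 : 1 ≤ i) (h104 : i ≤ 104) (hr : 0 < evp (dat i).2.2) :
    Fmap i '' unitSq = RIcc (lox i) (hix i) (loy i) (hiy i) := by
  rw [Fmap_eq i h1 h104]
  unfold homD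
  rw [hom_image_Icc _ _ _ hr]
  unfold RIcc lox hix loy hiy
  rw [evp_add, evp_add]

lemma image_Ioo_eq (i : ℕ) (h1 : 1 ≤ i) (h104 : i ≤ 104) (hr : 0 < evp (dat i).2.2) :
    Fmap i '' openUnitSq = RIoo (lox i) (hix i) (loy i) (hiy i) := by
  rw [Fmap_eq i h1 h104]
  unfold homD
  rw [hom_image_Ioo _ _ _ hr]
  unfold RIoo lox hix loy hiy
  rw [evp_add, evp_add]

lemma check1_sound {i j : ℕ} (h : check1 i j = true) :
    Disjoint (RIoo (lox i) (hix i) (loy i) (hiy i)) (RIoo (lox j) (hix j) (loy j) (hiy j)) := by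
  rw [Set.disjoint_left]
  rintro z ⟨⟨a1, a2⟩, b1, b2⟩ ⟨⟨c1, c2⟩, d1, d2⟩
  simp only [lox, hix, loy, hiy, evp_add] at a1 a2 b1 b2 c1 c2 d1 d2
  unfold check1 at h
  simp only [Bool.or_eq_true] at h
  rcases h with ((h | h) | h) | h <;> have hh := bLe_sound h <;> rw [evp_add] at hh <;> linarith

lemma check2_sound {i : ℕ} (h : check2 i = true) :
    RIoo (lox i) (hix i) (loy i) (hiy i) ⊆ openUnitSq := by
  unfold check2 at h
  simp only [Bool.and_eq_true] at h
  obtain ⟨⟨⟨⟨h1, h2⟩, h3⟩, h4⟩, -⟩ := h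
  have e1 := bnn_sound h1
  have e2 := bnn_sound h2
  have e3 := bLe_sound h3
  have e4 := bLe_sound h4
  have eo : evp one2 = 1 := by unfold evp one2; norm_num
  rw [eo, evp_add] at e3 e4
  rintro z ⟨⟨a1, a2⟩, b1, b2⟩
  simp only [lox, hix, loy, hiy, evp_add] at a1 a2 b1 b2
  exact ⟨⟨by linarith, by linarith⟩, by linarith, by linarith⟩

set_option maxRecDepth 40000 in
lemma check3_sound {i j : ℕ} (h : check3 i j = true) :
    (min (hix i) (hix j) < max (lox i) (lox j) ∨ min (hiy i) (hiy j) < max (loy i) (loy j)) ∨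
    (max (lox i) (lox j) = min (hix i) (hix j) ∧ max (loy i) (loy j) = min (hiy i) (hiy j)) ∨
    (max (lox i) (lox j) = min (hix i) (hix j) ∧ max (loy i) (loy j) < min (hiy i) (hiy j)) ∨
    (max (loy i) (loy j) = min (hiy i) (hiy j) ∧ max (lox i) (lox j) < min (hix i) (hix j)) := by
  simp only [check3, Bool.or_eq_true, Bool.and_eq_true, decide_eq_true_eq] at h
  rcases h with (((h | h) | h) | h) | ⟨⟨⟨⟨⟨⟨⟨⟨g1, g2⟩, g3⟩, g4⟩, g5⟩, g6⟩, g7⟩, g8⟩, hc⟩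
  · left; left
    have := bLt_sound h
    calc min (hix i) (hix j) ≤ hix i := min_le_left _ _
      _ < lox j := by unfold hix lox; exact this
      _ ≤ max (lox i) (lox j) := le_max_right _ _
  · left; left
    have := bLt_sound h
    calc min (hix i) (hix j) ≤ hix j := min_le_right _ _
      _ < lox i := by unfold hix lox; exact this
      _ ≤ max (lox i) (lox j) := le_max_left _ _
  · left; right
    have := bLt_sound h
    calc min (hiy i) (hiy j) ≤ hiy i := min_le_left _ _
      _ < loy j := by unfold hiy loy; exact this
      _ ≤ max (loy i) (loy j) := le_max_right _ _
  · left; right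
    have := bLt_sound h
    calc min (hiy i) (hiy j) ≤ hiy j := min_le_right _ _
      _ < loy i := by unfold hiy loy; exact this
      _ ≤ max (loy i) (loy j) := le_max_left _ _
  · have hmx := pmax_eq g1 g2
    have hnx := pmin_eq g3 g4
    have hmy := pmax_eq g5 g6
    have hny := pmin_eq g7 g8
    unfold lox hix loy hiy
    rcases hc with (hc | hc) | hc
    · right; left
      exact ⟨by rw [← hmx, ← hnx]; exact congrArg evp hc.1,
        by rw [← hmy, ← hny]; exact congrArg evp hc.2⟩
    · right; right; left
      refine ⟨by rw [← hmx, ← hnx]; exact congrArg evp hc.1, ?_⟩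
      rw [← hmy, ← hny]; exact bLt_sound hc.2
    · right; right; right
      refine ⟨by rw [← hmy, ← hny]; exact congrArg evp hc.1, ?_⟩
      rw [← hmx, ← hnx]; exact bLt_sound hc.2

end Aux

set_option maxRecDepth 1000000 in
set_option maxHeartbeats 4000000 in
lemma decide1 : ∀ i ∈ Finset.Icc 1 104, ∀ j ∈ Finset.Icc 1 104, i ≠ j → check1 i j = true := by decide

set_option maxRecDepth 1000000 in
set_option maxHeartbeats 4000000 in
lemma decide2 : ∀ i ∈ Finset.Icc 1 104, check2 i = true := by decide

set_option maxRecDepth 1000000 in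
set_option maxHeartbeats 4000000 in
lemma decide3 : ∀ i ∈ Finset.Icc 1 104, ∀ j ∈ Finset.Icc 1 104, i ≠ j → check3 i j = true := by decide

lemma rpos (i : ℕ) (hi : i ∈ Finset.Icc 1 104) : 0 < evp (dat i).2.2 := by
  have h := decide2 i hi
  unfold check2 at h
  simp only [Bool.and_eq_true] at h
  exact bpos_sound h.2

/-- The 104 similarities satisfy the open set condition with the open unit square:
    the images of the open square are pairwise disjoint and contained in the open square;
    equivalently, for i ≠ j the intersection F_i(□) ∩ F_j(□) is a (nondegenerate) line
    segment, a single point, or empty. -/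
theorem stmt4 :
    (∀ i ∈ Finset.Icc 1 104, ∀ j ∈ Finset.Icc 1 104, i ≠ j →
      Disjoint (Fmap i '' openUnitSq) (Fmap j '' openUnitSq)) ∧
    (∀ i ∈ Finset.Icc 1 104, Fmap i '' openUnitSq ⊆ openUnitSq) ∧
    (∀ i ∈ Finset.Icc 1 104, ∀ j ∈ Finset.Icc 1 104, i ≠ j →
      (∃ p q : Plane, p ≠ q ∧ Fmap i '' unitSq ∩ Fmap j '' unitSq = segment ℝ p q) ∨
      (∃ p : Plane, Fmap i '' unitSq ∩ Fmap j '' unitSq = {p}) ∨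
      Fmap i '' unitSq ∩ Fmap j '' unitSq = ∅) := by
  refine ⟨?_, ?_, ?_⟩
  · intro i hi j hj hij
    obtain ⟨hi1, hi2⟩ := Finset.mem_Icc.1 hi
    obtain ⟨hj1, hj2⟩ := Finset.mem_Icc.1 hj
    rw [image_Ioo_eq i hi1 hi2 (rpos i hi), image_Ioo_eq j hj1 hj2 (rpos j hj)]
    exact check1_sound (decide1 i hi j hj hij)
  · intro i hi
    obtain ⟨hi1, hi2⟩ := Finset.mem_Icc.1 hi
    rw [image_Ioo_eq i hi1 hi2 (rpos i hi)]
    exact check2_sound (decide2 i hi)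
  · intro i hi j hj hij
    obtain ⟨hi1, hi2⟩ := Finset.mem_Icc.1 hi
    obtain ⟨hj1, hj2⟩ := Finset.mem_Icc.1 hj
    rw [image_Icc_eq i hi1 hi2 (rpos i hi), image_Icc_eq j hj1 hj2 (rpos j hj), RIcc_inter]
    rcases check3_sound (decide3 i hi j hj hij) with (h | h) | ⟨h1, h2⟩ | ⟨h1, h2⟩ | ⟨h1, h2⟩
    · right; right; exact RIcc_emptyX h
    · right; right; exact RIcc_emptyY h
    · right; left; exact ⟨_, RIcc_point h1 h2⟩
    · left
      exact ⟨_, _, pt_ne_of_snd (ne_of_lt h2), RIcc_segV h1 h2⟩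
    · left
      exact ⟨_, _, pt_ne_of_fst (ne_of_lt h2), RIcc_segH h2 h1⟩
end

section
/- The union ⋃_{i=1}^{104} F_i(□) of the 104 closed first-level squares is a connected subset of ℝ². -/
section AuxLemmas

lemma haa : aa ^ 2 + aa = 1/24 := by
  have h : Real.sqrt (7/24) ^ 2 = 7/24 := Real.sq_sqrt (by norm_num)
  unfold aa; nlinarith [h]

lemma base_touch (b : ℕ) (h1 : 1 ≤ b) (h2 : b ≤ 25) :
    Fq b (pt 1 0) = Fq (b+1) (pt 0 0) := by
  interval_cases b <;>
    (ext j; fin_cases j <;> norm_num [Fq, Fbase, Γh, pt] <;> linarith [haa])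

lemma it1 : ∀ x, Γr^[1] x = Γr x := fun _ => rfl
lemma it2 : ∀ x, Γr^[2] x = Γr (Γr x) := fun _ => rfl
lemma it3 : ∀ x, Γr^[3] x = Γr (Γr (Γr x)) := fun _ => rfl

lemma J1 : Fmap 27 (pt 1 0) = Fmap 26 (pt 1 1) := by
  ext j; fin_cases j <;> norm_num [Fmap, Fq, Fbase, Γh, Γr, pt, it1, it2, it3]

lemma J2 : Fmap 51 (pt 1 0) = Fmap 50 (pt 1 1) := by
  ext j; fin_cases j <;> norm_num [Fmap, Fq, Fbase, Γh, Γr, pt, it1, it2, it3]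

lemma J3 : Fmap 76 (pt 1 1) = Fmap 75 (pt 0 1) := by
  ext j; fin_cases j <;> norm_num [Fmap, Fq, Fbase, Γh, Γr, pt, it1, it2, it3]

lemma C1 : Fmap 101 (pt 0 0) = Fmap 13 (pt 0 1) := by
  ext j; fin_cases j <;> norm_num [Fmap, Fq, Fbase, Γh, Γr, pt]
lemma C2 : Fmap 102 (pt 0 0) = Fmap 101 (pt 1 0) := by
  ext j; fin_cases j <;> norm_num [Fmap, pt]
lemma C3 : Fmap 103 (pt 0 0) = Fmap 102 (pt 0 1) := by
  ext j; fin_cases j <;> norm_num [Fmap, pt]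
lemma C4 : Fmap 104 (pt 1 0) = Fmap 103 (pt 0 0) := by
  ext j; fin_cases j <;> norm_num [Fmap, pt]

lemma grc1 : Γr (pt 0 0) = pt 1 0 := by ext j; fin_cases j <;> norm_num [Γr, pt]
lemma grc2 : Γr (pt 1 0) = pt 1 1 := by ext j; fin_cases j <;> norm_num [Γr, pt]
lemma grc3 : Γr (pt 1 1) = pt 0 1 := by ext j; fin_cases j <;> norm_num [Γr, pt]
lemma grc4 : Γr (pt 0 1) = pt 0 0 := by ext j; fin_cases j <;> norm_num [Γr, pt]

lemma run0 (b : ℕ) (h1 : 1 ≤ b) (h2 : b ≤ 25) :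
    Fmap (b+1) (pt 0 0) = Fmap b (pt 1 0) := by
  have e1 : b ≤ 26 := by omega
  have e2 : b + 1 ≤ 26 := by omega
  simp only [Fmap, if_pos e1, if_pos e2]
  exact (base_touch b h1 h2).symm

lemma run1 (b : ℕ) (h1 : 2 ≤ b) (h2 : b ≤ 24) :
    Fmap (25+b+1) (pt 1 0) = Fmap (25+b) (pt 1 1) := by
  have e1 : ¬ (25+b ≤ 26) := by omega
  have e1' : ¬ (25+b+1 ≤ 26) := by omega
  have e2 : 25+b ≤ 100 := by omega
  have e2' : 25+b+1 ≤ 100 := by omega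
  have d : (25+b-1)/25 = 1 := by omega
  have d' : (25+b+1-1)/25 = 1 := by omega
  have s : 25+b - 25 * 1 = b := by omega
  have s' : 25+b+1 - 25 * 1 = b+1 := by omega
  simp only [Fmap, if_neg e1, if_pos e2, if_neg e1', if_pos e2', d, d', s, s',
    Function.comp_apply]
  norm_num [grc1, grc2, grc3, grc4]
  rw [base_touch b (by omega) (by omega)]

lemma run2 (b : ℕ) (h1 : 1 ≤ b) (h2 : b ≤ 24) :
    Fmap (50+b+1) (pt 1 1) = Fmap (50+b) (pt 0 1) := by
  have e1 : ¬ (50+b ≤ 26) := by omega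
  have e1' : ¬ (50+b+1 ≤ 26) := by omega
  have e2 : 50+b ≤ 100 := by omega
  have e2' : 50+b+1 ≤ 100 := by omega
  have d : (50+b-1)/25 = 2 := by omega
  have d' : (50+b+1-1)/25 = 2 := by omega
  have s : 50+b - 25 * 2 = b := by omega
  have s' : 50+b+1 - 25 * 2 = b+1 := by omega
  simp only [Fmap, if_neg e1, if_pos e2, if_neg e1', if_pos e2', d, d', s, s',
    Function.comp_apply]
  norm_num [grc1, grc2, grc3, grc4]
  rw [base_touch b (by omega) (by omega)]

lemma run3 (b : ℕ) (h1 : 1 ≤ b) (h2 : b ≤ 24) :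
    Fmap (75+b+1) (pt 0 1) = Fmap (75+b) (pt 0 0) := by
  have e1 : ¬ (75+b ≤ 26) := by omega
  have e1' : ¬ (75+b+1 ≤ 26) := by omega
  have e2 : 75+b ≤ 100 := by omega
  have e2' : 75+b+1 ≤ 100 := by omega
  have d : (75+b-1)/25 = 3 := by omega
  have d' : (75+b+1-1)/25 = 3 := by omega
  have s : 75+b - 25 * 3 = b := by omega
  have s' : 75+b+1 - 25 * 3 = b+1 := by omega
  simp only [Fmap, if_neg e1, if_pos e2, if_neg e1', if_pos e2', d, d', s, s',
    Function.comp_apply]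
  norm_num [grc1, grc2, grc3, grc4]
  rw [base_touch b (by omega) (by omega)]

lemma contGh : Continuous Γh := by
  unfold Γh pt; refine (PiLp.continuous_toLp 2 _).comp (continuous_pi ?_); intro i; fin_cases i <;> simp <;> fun_prop
lemma contGr : Continuous Γr := by
  unfold Γr pt; refine (PiLp.continuous_toLp 2 _).comp (continuous_pi ?_); intro i; fin_cases i <;> simp <;> fun_prop
lemma contFbase (i : ℕ) : Continuous (Fbase i) := by
  unfold Fbase; split_ifs <;> fun_prop
lemma contFq (i : ℕ) : Continuous (Fq i) := by
  unfold Fq; split_ifs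
  · exact contFbase i
  · exact contGh.comp ((contFbase _).comp contGh)
lemma contFmap (i : ℕ) : Continuous (Fmap i) := by
  unfold Fmap; split_ifs
  · exact contFq i
  · exact (contGr.iterate _).comp ((contFq _).comp (contGr.iterate _))
  all_goals fun_prop

lemma c00 : pt 0 0 ∈ unitSq := by norm_num [unitSq, pt]
lemma c10 : pt 1 0 ∈ unitSq := by norm_num [unitSq, pt]
lemma c01 : pt 0 1 ∈ unitSq := by norm_num [unitSq, pt]
lemma c11 : pt 1 1 ∈ unitSq := by norm_num [unitSq, pt]

lemma convex_unitSq : Convex ℝ unitSq := by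
  intro x hx y hy a b ha hb hab
  exact ⟨by have := (convex_Icc (0:ℝ) 1) hx.1 hy.1 ha hb hab; simpa using this,
         by have := (convex_Icc (0:ℝ) 1) hx.2 hy.2 ha hb hab; simpa using this⟩

lemma connS (i : ℕ) : IsConnected (Fmap i '' unitSq) :=
  (convex_unitSq.isConnected ⟨pt 0 0, c00⟩).image _ (contFmap i).continuousOn

lemma pairNE (i j : ℕ) (qi qj : Plane) (hi : qi ∈ unitSq) (hj : qj ∈ unitSq)
    (h : Fmap i qi = Fmap j qj) :
    ((Fmap i '' unitSq) ∩ (Fmap j '' unitSq)).Nonempty :=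
  ⟨Fmap i qi, ⟨qi, hi, rfl⟩, ⟨qj, hj, h.symm⟩⟩

lemma chain (S : ℕ → Set Plane) (hc : ∀ i, IsConnected (S i)) :
    ∀ n, 1 ≤ n →
    (∀ i, 2 ≤ i → i ≤ n → ∃ j, 1 ≤ j ∧ j < i ∧ (S i ∩ S j).Nonempty) →
    IsConnected (⋃ i ∈ Finset.Icc 1 n, S i) := by
  intro n
  induction n with
  | zero => omega
  | succ n ih =>
    intro _ hp
    by_cases hn : 1 ≤ n
    · have hU := ih hn (fun i h2 hi => hp i h2 (by omega))
      have hins : Finset.Icc 1 (n+1) = insert (n+1) (Finset.Icc 1 n) := by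
        ext k; simp only [Finset.mem_Icc, Finset.mem_insert]; omega
      rw [hins, Finset.set_biUnion_insert]
      obtain ⟨j, hj1, hj2, x, hx1, hx2⟩ := hp (n+1) (by omega) le_rfl
      refine IsConnected.union ⟨x, hx1, ?_⟩ (hc (n+1)) hU
      exact Set.mem_biUnion (Finset.mem_coe.mpr (Finset.mem_Icc.mpr ⟨hj1, by omega⟩)) hx2
    · have h0 : n = 0 := by omega
      subst h0
      simpa using hc 1

end AuxLemmas

/-- The union ⋃_{i=1}^{104} F_i(□) of the 104 closed first-level squares is connected. -/
theorem stmt5 :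
    IsConnected (⋃ i ∈ Finset.Icc 1 104, Fmap i '' unitSq) := by
  apply chain (fun i => Fmap i '' unitSq) connS 104 (by norm_num)
  intro i h2 h104
  by_cases hA : i ≤ 26
  · refine ⟨i-1, by omega, by omega, ?_⟩
    have h := run0 (i-1) (by omega) (by omega)
    rw [show i-1+1 = i from by omega] at h
    exact pairNE i (i-1) _ _ c00 c10 h
  by_cases hB : i = 27
  · subst hB; exact ⟨26, by omega, by omega, pairNE 27 26 _ _ c10 c11 J1⟩
  by_cases hC : i ≤ 50
  · refine ⟨i-1, by omega, by omega, ?_⟩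
    have h := run1 (i-26) (by omega) (by omega)
    rw [show 25+(i-26)+1 = i from by omega, show 25+(i-26) = i-1 from by omega] at h
    exact pairNE i (i-1) _ _ c10 c11 h
  by_cases hD : i = 51
  · subst hD; exact ⟨50, by omega, by omega, pairNE 51 50 _ _ c10 c11 J2⟩
  by_cases hE : i ≤ 75
  · refine ⟨i-1, by omega, by omega, ?_⟩
    have h := run2 (i-51) (by omega) (by omega)
    rw [show 50+(i-51)+1 = i from by omega, show 50+(i-51) = i-1 from by omega] at h
    exact pairNE i (i-1) _ _ c11 c01 h
  by_cases hF : i = 76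
  · subst hF; exact ⟨75, by omega, by omega, pairNE 76 75 _ _ c11 c01 J3⟩
  by_cases hG : i ≤ 100
  · refine ⟨i-1, by omega, by omega, ?_⟩
    have h := run3 (i-76) (by omega) (by omega)
    rw [show 75+(i-76)+1 = i from by omega, show 75+(i-76) = i-1 from by omega] at h
    exact pairNE i (i-1) _ _ c01 c00 h
  by_cases hH : i = 101
  · subst hH; exact ⟨13, by omega, by omega, pairNE 101 13 _ _ c00 c01 C1⟩
  by_cases hI : i = 102
  · subst hI; exact ⟨101, by omega, by omega, pairNE 102 101 _ _ c00 c10 C2⟩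
  by_cases hJ : i = 103
  · subst hJ; exact ⟨102, by omega, by omega, pairNE 103 102 _ _ c00 c01 C3⟩
  · have h104' : i = 104 := by omega
    subst h104'; exact ⟨103, by omega, by omega, pairNE 104 103 _ _ c10 c00 C4⟩
end

section
/- The attractor K is invariant under each of the eight self-isometries of the unit square: Γ(K) = K for every Γ ∈ {Γ_v, Γ_h, Γ_{d₁}, Γ_{d₂}, id, Γ_{r₁}, Γ_{r₂}, Γ_{r₃}}. -/
namespace Stmt7Aux

@[simp] lemma pt0 (s t : ℝ) : pt s t 0 = s := rfl
@[simp] lemma pt1 (s t : ℝ) : pt s t 1 = t := rfl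

lemma plane_ext {x y : Plane} (h0 : x 0 = y 0) (h1 : x 1 = y 1) : x = y := by
  ext i; fin_cases i <;> assumption

lemma it0 (x : Plane) : Γr^[0] x = x := rfl
lemma it1 (x : Plane) : Γr^[1] x = Γr x := rfl
lemma it2 (x : Plane) : Γr^[2] x = Γr (Γr x) := rfl
lemma it3 (x : Plane) : Γr^[3] x = Γr (Γr (Γr x)) := rfl
lemma it4 (x : Plane) : Γr^[4] x = Γr (Γr (Γr (Γr x))) := rfl

lemma Γr4 (x : Plane) : Γr (Γr (Γr (Γr x))) = x := by
  apply plane_ext <;> simp [Γr]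

lemma Γh2 (x : Plane) : Γh (Γh x) = x := by
  apply plane_ext <;> simp [Γh]

lemma hr (x : Plane) : Γh (Γr x) = Γr (Γr (Γr (Γh x))) := by
  apply plane_ext <;> simp [Γh, Γr]

lemma conjR_aff (c b0 b1 : ℝ) (x : Plane) :
    Γr (c • x + pt b0 b1) = c • (Γr x) + pt (1 - c - b1) b0 := by
  apply plane_ext <;> simp [Γr, pt] <;> ring

lemma conjH_aff (c b0 b1 : ℝ) (x : Plane) :
    Γh (c • x + pt b0 b1) = c • (Γh x) + pt (1 - c - b0) b1 := by
  apply plane_ext <;> simp [Γh, pt] <;> ring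

lemma fq26 (y : Plane) : Fq 26 y = Γr (Fq 1 (Γr (Γr (Γr y)))) := by
  apply plane_ext <;> norm_num [Fq, Fbase, Γh, Γr, pt] <;> ring

lemma fqD (k : ℕ) (h1 : 1 ≤ k) (h2 : k ≤ 26) (y : Plane) :
    Γh (Fq k y) = Fq (27 - k) (Γh y) := by
  rcases le_or_gt k 13 with h | h
  · have hk : 27 - (27 - k) = k := by omega
    have h' : ¬ (27 - k ≤ 13) := by omega
    simp only [Fq, if_pos h, if_neg h', hk, Function.comp_apply, Γh2]
  · have h' : ¬ (k ≤ 13) := by omega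
    have h'' : 27 - k ≤ 13 := by omega
    simp only [Fq, if_neg h', if_pos h'', Function.comp_apply, Γh2]

lemma fmapG (k j : ℕ) (hk1 : 1 ≤ k) (hk2 : k ≤ 25) (hj : j ≤ 3) (x : Plane) :
    Fmap (k + 25 * j) x = Γr^[j] (Fq k (Γr^[4 - j] x)) := by
  by_cases hle : k + 25 * j ≤ 26
  · rcases (by omega : j = 0 ∧ 1 ≤ k ∨ (j = 1 ∧ k = 1)) with ⟨rfl, -⟩ | ⟨rfl, rfl⟩
    · simp only [Nat.mul_zero, Nat.add_zero, Nat.sub_zero]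
      unfold Fmap
      rw [if_pos (by omega : k ≤ 26), it0, it4, Γr4]
    · norm_num [Fmap]
      exact fq26 x
  · have hj' : (k + 25 * j - 1) / 25 = j := by omega
    have h100 : k + 25 * j ≤ 100 := by omega
    simp only [Fmap, if_neg hle, if_pos h100, hj', Function.comp_apply]
    have hk' : k + 25 * j - 25 * j = k := by omega
    rw [hk']

def σm : ℕ → ℕ := fun i =>
  if i ≤ 75 then i + 25 else if i ≤ 100 then i - 75 else if i ≤ 103 then i + 1 else 101

def τm : ℕ → ℕ := fun i =>
  if i ≤ 26 then 27 - i else if i ≤ 100 then 127 - i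
  else if i = 101 then 102 else if i = 102 then 101 else if i = 103 then 104 else 103

lemma conjR (i : ℕ) (h1 : 1 ≤ i) (h2 : i ≤ 104) (x : Plane) :
    Γr (Fmap i x) = Fmap (σm i) (Γr x) := by
  by_cases hi : i ≤ 100
  · obtain ⟨k, j, hk1, hk2, hj3, rfl⟩ :
        ∃ k j, 1 ≤ k ∧ k ≤ 25 ∧ j ≤ 3 ∧ i = k + 25 * j :=
      ⟨i - 25 * ((i - 1) / 25), (i - 1) / 25, by omega, by omega, by omega, by omega⟩
    rw [fmapG k j hk1 hk2 hj3 x]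
    interval_cases j
    · rw [show σm (k + 25 * 0) = k + 25 * 1 by simp only [σm]; split_ifs <;> omega,
        fmapG k 1 hk1 hk2 (by omega)]
      simp [it0, it1, it2, it3, it4, Γr4]
    · rw [show σm (k + 25 * 1) = k + 25 * 2 by simp only [σm]; split_ifs <;> omega,
        fmapG k 2 hk1 hk2 (by omega)]
      simp [it0, it1, it2, it3, it4, Γr4]
    · rw [show σm (k + 25 * 2) = k + 25 * 3 by simp only [σm]; split_ifs <;> omega,
        fmapG k 3 hk1 hk2 (by omega)]
      simp [it0, it1, it2, it3, it4, Γr4]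
    · rw [show σm (k + 25 * 3) = k + 25 * 0 by simp only [σm]; split_ifs <;> omega,
        fmapG k 0 hk1 hk2 (by omega)]
      simp [it0, it1, it2, it3, it4, Γr4]
  · interval_cases i
    · rw [show σm 101 = 102 from rfl,
        show Fmap 101 = fun x => (1/4 : ℝ) • x + pt (1/4) (1/4) by norm_num [Fmap],
        show Fmap 102 = fun x => (1/4 : ℝ) • x + pt (1/2) (1/4) by norm_num [Fmap]]
      rw [conjR_aff]; norm_num
    · rw [show σm 102 = 103 from rfl,
        show Fmap 102 = fun x => (1/4 : ℝ) • x + pt (1/2) (1/4) by norm_num [Fmap],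
        show Fmap 103 = fun x => (1/4 : ℝ) • x + pt (1/2) (1/2) by norm_num [Fmap]]
      rw [conjR_aff]; norm_num
    · rw [show σm 103 = 104 from rfl,
        show Fmap 103 = fun x => (1/4 : ℝ) • x + pt (1/2) (1/2) by norm_num [Fmap],
        show Fmap 104 = fun x => (1/4 : ℝ) • x + pt (1/4) (1/2) by norm_num [Fmap]]
      rw [conjR_aff]; norm_num
    · rw [show σm 104 = 101 from rfl,
        show Fmap 104 = fun x => (1/4 : ℝ) • x + pt (1/4) (1/2) by norm_num [Fmap],
        show Fmap 101 = fun x => (1/4 : ℝ) • x + pt (1/4) (1/4) by norm_num [Fmap]]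
      rw [conjR_aff]; norm_num

lemma conjH (i : ℕ) (h1 : 1 ≤ i) (h2 : i ≤ 104) (x : Plane) :
    Γh (Fmap i x) = Fmap (τm i) (Γh x) := by
  by_cases hi : i ≤ 100
  · obtain ⟨k, j, hk1, hk2, hj3, rfl⟩ :
        ∃ k j, 1 ≤ k ∧ k ≤ 25 ∧ j ≤ 3 ∧ i = k + 25 * j :=
      ⟨i - 25 * ((i - 1) / 25), (i - 1) / 25, by omega, by omega, by omega, by omega⟩
    rw [fmapG k j hk1 hk2 hj3 x]
    rcases eq_or_lt_of_le hk1 with hk | hk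
    · -- k = 1
      obtain rfl : k = 1 := hk.symm
      interval_cases j
      · rw [show τm (1 + 25 * 0) = 1 + 25 * 1 by simp only [τm]; split_ifs <;> omega,
          fmapG 1 1 (by omega) (by omega) (by omega)]
        simp [it0, it1, it2, it3, it4, hr, fqD 1 (by omega) (by omega), fq26, Γr4]
      · rw [show τm (1 + 25 * 1) = 1 + 25 * 0 by simp only [τm]; split_ifs <;> omega,
          fmapG 1 0 (by omega) (by omega) (by omega)]
        simp [it0, it1, it2, it3, it4, hr, fqD 1 (by omega) (by omega), fq26, Γr4]
      · rw [show τm (1 + 25 * 2) = 1 + 25 * 3 by simp only [τm]; split_ifs <;> omega,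
          fmapG 1 3 (by omega) (by omega) (by omega)]
        simp [it0, it1, it2, it3, it4, hr, fqD 1 (by omega) (by omega), fq26, Γr4]
      · rw [show τm (1 + 25 * 3) = 1 + 25 * 2 by simp only [τm]; split_ifs <;> omega,
          fmapG 1 2 (by omega) (by omega) (by omega)]
        simp [it0, it1, it2, it3, it4, hr, fqD 1 (by omega) (by omega), fq26, Γr4]
    · -- 2 ≤ k
      interval_cases j
      · rw [show τm (k + 25 * 0) = (27 - k) + 25 * 0 by simp only [τm]; split_ifs <;> omega,
          fmapG (27 - k) 0 (by omega) (by omega) (by omega)]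
        simp [it0, it1, it2, it3, it4, hr, fqD k (by omega) (by omega), Γr4]
      · rw [show τm (k + 25 * 1) = (27 - k) + 25 * 3 by simp only [τm]; split_ifs <;> omega,
          fmapG (27 - k) 3 (by omega) (by omega) (by omega)]
        simp [it0, it1, it2, it3, it4, hr, fqD k (by omega) (by omega), Γr4]
      · rw [show τm (k + 25 * 2) = (27 - k) + 25 * 2 by simp only [τm]; split_ifs <;> omega,
          fmapG (27 - k) 2 (by omega) (by omega) (by omega)]
        simp [it0, it1, it2, it3, it4, hr, fqD k (by omega) (by omega), Γr4]
      · rw [show τm (k + 25 * 3) = (27 - k) + 25 * 1 by simp only [τm]; split_ifs <;> omega,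
          fmapG (27 - k) 1 (by omega) (by omega) (by omega)]
        simp [it0, it1, it2, it3, it4, hr, fqD k (by omega) (by omega), Γr4]
  · interval_cases i
    · rw [show τm 101 = 102 from rfl,
        show Fmap 101 = fun x => (1/4 : ℝ) • x + pt (1/4) (1/4) by norm_num [Fmap],
        show Fmap 102 = fun x => (1/4 : ℝ) • x + pt (1/2) (1/4) by norm_num [Fmap]]
      rw [conjH_aff]; norm_num
    · rw [show τm 102 = 101 from rfl,
        show Fmap 102 = fun x => (1/4 : ℝ) • x + pt (1/2) (1/4) by norm_num [Fmap],
        show Fmap 101 = fun x => (1/4 : ℝ) • x + pt (1/4) (1/4) by norm_num [Fmap]]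
      rw [conjH_aff]; norm_num
    · rw [show τm 103 = 104 from rfl,
        show Fmap 103 = fun x => (1/4 : ℝ) • x + pt (1/2) (1/2) by norm_num [Fmap],
        show Fmap 104 = fun x => (1/4 : ℝ) • x + pt (1/4) (1/2) by norm_num [Fmap]]
      rw [conjH_aff]; norm_num
    · rw [show τm 104 = 103 from rfl,
        show Fmap 104 = fun x => (1/4 : ℝ) • x + pt (1/4) (1/2) by norm_num [Fmap],
        show Fmap 103 = fun x => (1/4 : ℝ) • x + pt (1/2) (1/2) by norm_num [Fmap]]
      rw [conjH_aff]; norm_num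

lemma distΓr (x y : Plane) : dist (Γr x) (Γr y) = dist x y := by
  simp only [EuclideanSpace.dist_eq, Fin.sum_univ_two, Γr, Real.dist_eq, pt0, pt1, sq_abs]
  ring_nf

lemma distΓh (x y : Plane) : dist (Γh x) (Γh y) = dist x y := by
  simp only [EuclideanSpace.dist_eq, Fin.sum_univ_two, Γh, Real.dist_eq, pt0, pt1, sq_abs]
  ring_nf

lemma distΓrIt (n : ℕ) (x y : Plane) : dist (Γr^[n] x) (Γr^[n] y) = dist x y := by
  induction n with
  | zero => rfl
  | succ m ih =>
    rw [Function.iterate_succ_apply', Function.iterate_succ_apply', distΓr, ih]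

lemma dist_aff (c : ℝ) (b x y : Plane) : dist (c • x + b) (c • y + b) = |c| * dist x y := by
  simp only [dist_eq_norm]
  rw [show c • x + b - (c • y + b) = c • (x - y) by module, norm_smul]
  simp [Real.norm_eq_abs]

lemma aa_pos : 0 < aa := by
  have : (1/2 : ℝ) < Real.sqrt (7/24) := by
    rw [show (1/2 : ℝ) = Real.sqrt ((1/2)^2) by rw [Real.sqrt_sq]; norm_num]
    apply Real.sqrt_lt_sqrt <;> norm_num
  simp only [aa]; linarith

lemma aa_lt : aa < 1/4 := by
  have : Real.sqrt (7/24) < 3/4 := by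
    rw [show (3/4 : ℝ) = Real.sqrt ((3/4)^2) by rw [Real.sqrt_sq]; norm_num]
    apply Real.sqrt_lt_sqrt <;> norm_num
  simp only [aa]; linarith

lemma fbase_lip (i : ℕ) (x y : Plane) : dist (Fbase i x) (Fbase i y) ≤ 1/4 * dist x y := by
  have hd : 0 ≤ dist x y := dist_nonneg
  have h1 : (0:ℝ) < aa := aa_pos
  have h2 : aa < 1/4 := aa_lt
  unfold Fbase
  split_ifs
  · rw [dist_aff]; rw [show |(1/4 : ℝ)| = 1/4 by norm_num]
  · rw [dist_aff, abs_of_pos h1]; nlinarith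
  · rw [dist_aff, abs_of_pos (by positivity : (0:ℝ) < aa ^ 2)]
    nlinarith [sq_nonneg aa, mul_le_mul_of_nonneg_right (mul_lt_mul_of_pos_right h2 h1).le hd]

lemma fq_lip (i : ℕ) (x y : Plane) : dist (Fq i x) (Fq i y) ≤ 1/4 * dist x y := by
  unfold Fq
  split_ifs
  · exact fbase_lip i x y
  · simp only [Function.comp_apply]
    rw [distΓh]
    calc dist (Fbase (27 - i) (Γh x)) (Fbase (27 - i) (Γh y))
        ≤ 1/4 * dist (Γh x) (Γh y) := fbase_lip _ _ _
      _ = 1/4 * dist x y := by rw [distΓh]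

lemma fmap_lip (i : ℕ) (x y : Plane) : dist (Fmap i x) (Fmap i y) ≤ 1/4 * dist x y := by
  unfold Fmap
  split_ifs
  · exact fq_lip i x y
  · simp only [Function.comp_apply]
    rw [distΓrIt]
    calc dist (Fq _ (Γr^[4 - (i-1)/25] x)) (Fq _ (Γr^[4 - (i-1)/25] y))
        ≤ 1/4 * dist (Γr^[4 - (i-1)/25] x) (Γr^[4 - (i-1)/25] y) := fq_lip _ _ _
      _ = 1/4 * dist x y := by rw [distΓrIt]
  · rw [dist_aff, show |(1/4 : ℝ)| = 1/4 by norm_num]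
  · rw [dist_aff, show |(1/4 : ℝ)| = 1/4 by norm_num]
  · rw [dist_aff, show |(1/4 : ℝ)| = 1/4 by norm_num]
  · rw [dist_aff, show |(1/4 : ℝ)| = 1/4 by norm_num]

lemma attractor_unique (A B : Set Plane) (hAne : A.Nonempty) (hBne : B.Nonempty)
    (hAc : IsCompact A) (hBc : IsCompact B)
    (hA : A = ⋃ i ∈ Finset.Icc 1 104, Fmap i '' A)
    (hB : B = ⋃ i ∈ Finset.Icc 1 104, Fmap i '' B) : A = B := by
  have hfin : EMetric.hausdorffEdist A B ≠ ⊤ :=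
    Metric.hausdorffEdist_ne_top_of_nonempty_of_bounded hAne hBne hAc.isBounded hBc.isBounded
  set d := Metric.hausdorffDist A B with hd
  have hd0 : 0 ≤ d := Metric.hausdorffDist_nonneg
  have key : d ≤ 1/4 * d := by
    apply Metric.hausdorffDist_le_of_mem_dist (by positivity)
    · intro z hz
      rw [hA] at hz
      simp only [Set.mem_iUnion, Set.mem_image, Finset.mem_Icc] at hz
      obtain ⟨i, hi, a, ha, rfl⟩ := hz
      obtain ⟨b, hb, hab⟩ := hBc.exists_infDist_eq_dist hBne a
      refine ⟨Fmap i b, ?_, ?_⟩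
      · rw [hB]
        simp only [Set.mem_iUnion, Set.mem_image, Finset.mem_Icc]
        exact ⟨i, hi, b, hb, rfl⟩
      · calc dist (Fmap i a) (Fmap i b) ≤ 1/4 * dist a b := fmap_lip i a b
          _ = 1/4 * Metric.infDist a B := by rw [hab]
          _ ≤ 1/4 * d := by
              have := Metric.infDist_le_hausdorffDist_of_mem ha hfin
              linarith
    · intro z hz
      rw [hB] at hz
      simp only [Set.mem_iUnion, Set.mem_image, Finset.mem_Icc] at hz
      obtain ⟨i, hi, b, hb, rfl⟩ := hz
      obtain ⟨a, ha, hba⟩ := hAc.exists_infDist_eq_dist hAne b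
      refine ⟨Fmap i a, ?_, ?_⟩
      · rw [hA]
        simp only [Set.mem_iUnion, Set.mem_image, Finset.mem_Icc]
        exact ⟨i, hi, a, ha, rfl⟩
      · calc dist (Fmap i b) (Fmap i a) ≤ 1/4 * dist b a := fmap_lip i b a
          _ = 1/4 * Metric.infDist b A := by rw [hba]
          _ ≤ 1/4 * d := by
              have h' := Metric.infDist_le_hausdorffDist_of_mem hb
                (by rw [EMetric.hausdorffEdist_comm]; exact hfin)
              rw [Metric.hausdorffDist_comm] at h'
              linarith
  have hzero : d = 0 := by linarith
  exact (IsClosed.hausdorffDist_zero_iff_eq hAc.isClosed hBc.isClosed hfin).mp hzero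

lemma image_attractor (Γ : Plane → Plane) (hc : Continuous Γ) (σ : ℕ → ℕ)
    (hmem : ∀ i, 1 ≤ i → i ≤ 104 → 1 ≤ σ i ∧ σ i ≤ 104)
    (hsurj : ∀ m, 1 ≤ m → m ≤ 104 → ∃ i, (1 ≤ i ∧ i ≤ 104) ∧ σ i = m)
    (hconj : ∀ i, 1 ≤ i → i ≤ 104 → ∀ x, Γ (Fmap i x) = Fmap (σ i) (Γ x))
    (K : Set Plane) (hne : K.Nonempty) (hcomp : IsCompact K)
    (hK : K = ⋃ i ∈ Finset.Icc 1 104, Fmap i '' K) : Γ '' K = K := by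
  have hfix : Γ '' K = ⋃ i ∈ Finset.Icc 1 104, Fmap i '' (Γ '' K) := by
    apply Set.Subset.antisymm
    · rintro _ ⟨z, hz, rfl⟩
      rw [hK] at hz
      simp only [Set.mem_iUnion, Set.mem_image, Finset.mem_Icc] at hz
      obtain ⟨i, ⟨hi1, hi2⟩, a, ha, rfl⟩ := hz
      simp only [Set.mem_iUnion, Set.mem_image, Finset.mem_Icc]
      exact ⟨σ i, ⟨(hmem i hi1 hi2).1, (hmem i hi1 hi2).2⟩,
        Γ a, ⟨a, ha, rfl⟩, (hconj i hi1 hi2 a).symm⟩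
    · intro z hz
      simp only [Set.mem_iUnion, Set.mem_image, Finset.mem_Icc] at hz
      obtain ⟨m, ⟨hm1, hm2⟩, _, ⟨w, hw, rfl⟩, rfl⟩ := hz
      obtain ⟨i, ⟨hi1, hi2⟩, rfl⟩ := hsurj m hm1 hm2
      refine ⟨Fmap i w, ?_, hconj i hi1 hi2 w⟩
      rw [hK]
      simp only [Set.mem_iUnion, Set.mem_image, Finset.mem_Icc]
      exact ⟨i, ⟨hi1, hi2⟩, w, hw, rfl⟩
  exact attractor_unique (Γ '' K) K (hne.image Γ) hne (hcomp.image hc) hcomp hfix hK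

lemma contΓr : Continuous Γr := (Isometry.of_dist_eq distΓr).continuous
lemma contΓh : Continuous Γh := (Isometry.of_dist_eq distΓh).continuous

lemma σm_mem : ∀ i, 1 ≤ i → i ≤ 104 → 1 ≤ σm i ∧ σm i ≤ 104 := by
  intro i h1 h2; simp only [σm]; split_ifs <;> omega

lemma σm_surj : ∀ m, 1 ≤ m → m ≤ 104 → ∃ i, (1 ≤ i ∧ i ≤ 104) ∧ σm i = m := by
  intro m h1 h2
  refine ⟨if m ≤ 25 then m + 75 else if m ≤ 100 then m - 25
    else if m = 101 then 104 else m - 1, by split_ifs <;> omega, ?_⟩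
  simp only [σm]; split_ifs <;> omega

lemma τm_mem : ∀ i, 1 ≤ i → i ≤ 104 → 1 ≤ τm i ∧ τm i ≤ 104 := by
  intro i h1 h2; simp only [τm]; split_ifs <;> omega

lemma τm_surj : ∀ m, 1 ≤ m → m ≤ 104 → ∃ i, (1 ≤ i ∧ i ≤ 104) ∧ τm i = m := by
  intro m h1 h2
  refine ⟨if m ≤ 26 then 27 - m else if m ≤ 100 then 127 - m
    else if m = 101 then 102 else if m = 102 then 101 else if m = 103 then 104 else 103,
    by split_ifs <;> omega, ?_⟩
  simp only [τm]; split_ifs <;> omega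

end Stmt7Aux

open Stmt7Aux in
/-- The attractor K is invariant under each of the eight self-isometries of the
    unit square: Γ(K) = K for Γ ∈ {Γ_v, Γ_h, Γ_{d₁}, Γ_{d₂}, id, Γ_{r₁}, Γ_{r₂}, Γ_{r₃}}. -/
theorem stmt7 (K : Set Plane) (hne : K.Nonempty) (hcomp : IsCompact K)
    (hK : K = ⋃ i ∈ Finset.Icc 1 104, Fmap i '' K) :
    ∀ Γ ∈ ({Γv, Γh, Γd₁, Γd₂, id, Γr, Γr^[2], Γr^[3]} : Set (Plane → Plane)),
      Γ '' K = K := by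
  have hR : Γr '' K = K :=
    image_attractor Γr contΓr σm σm_mem σm_surj conjR K hne hcomp hK
  have hH : Γh '' K = K :=
    image_attractor Γh contΓh τm τm_mem τm_surj conjH K hne hcomp hK
  have hR2 : Γr^[2] '' K = K := by
    rw [show Γr^[2] = Γr ∘ Γr from funext fun x => rfl, Set.image_comp, hR, hR]
  have hR3 : Γr^[3] '' K = K := by
    rw [show Γr^[3] = Γr ∘ Γr^[2] from funext fun x => rfl, Set.image_comp, hR2, hR]
  intro Γ hΓ
  simp only [Set.mem_insert_iff, Set.mem_singleton_iff] at hΓ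
  obtain rfl | rfl | rfl | rfl | rfl | rfl | rfl | rfl := hΓ
  · rw [show Γv = Γr^[2] ∘ Γh from funext fun x => by
      apply plane_ext <;> simp [Γv, Γr, Γh] <;> ring, Set.image_comp, hH, hR2]
  · exact hH
  · rw [show Γd₁ = Γh ∘ Γr from funext fun x => by
      apply plane_ext <;> simp [Γd₁, Γr, Γh], Set.image_comp, hR, hH]
  · rw [show Γd₂ = Γr ∘ Γh from funext fun x => by
      apply plane_ext <;> simp [Γd₂, Γr, Γh], Set.image_comp, hH, hR]
  · exact Set.image_id K
  · exact hR
  · exact hR2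
  · exact hR3
end

section
/- Each of the four edges of the unit square is contained in the attractor K; in particular the bottom edge [0,1]×{0} satisfies [0,1]×{0} = ⋃_{i=1}^{26} F_i([0,1]×{0}) and hence [0,1]×{0} ⊆ K, and by the symmetries of K the segments {1}×[0,1], [0,1]×{1} and {0}×[0,1] are also contained in K. -/
/-- The bottom edge [0,1] × {0} of the unit square. -/
def bottomE : Set Plane := {z : Plane | z 0 ∈ Set.Icc (0:ℝ) 1 ∧ z 1 = 0}

/-- The right edge {1} × [0,1] of the unit square. -/
def rightE : Set Plane := {z : Plane | z 0 = 1 ∧ z 1 ∈ Set.Icc (0:ℝ) 1}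

/-- The top edge [0,1] × {1} of the unit square. -/
def topE : Set Plane := {z : Plane | z 0 ∈ Set.Icc (0:ℝ) 1 ∧ z 1 = 1}

/-- The left edge {0} × [0,1] of the unit square. -/
def leftE : Set Plane := {z : Plane | z 0 = 0 ∧ z 1 ∈ Set.Icc (0:ℝ) 1}

noncomputable section AuxSec
namespace Aux8

lemma pt0 (s t : ℝ) : pt s t 0 = s := by simp [pt]
lemma pt1 (s t : ℝ) : pt s t 1 = t := by simp [pt]
lemma pt_eta (z : Plane) : pt (z 0) (z 1) = z := by
  ext i; fin_cases i <;> simp [pt]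
lemma smul_add_pt (a s t : ℝ) (x : Plane) :
    a • x + pt s t = pt (a * x 0 + s) (a * x 1 + t) := by
  ext i; fin_cases i <;> simp [pt, PiLp.smul_apply, PiLp.add_apply]

lemma sqrt7 : Real.sqrt (7/24) ^ 2 = 7/24 := Real.sq_sqrt (by norm_num)
lemma aa_pos : 0 < aa := by
  have h := sqrt7
  have h2 := Real.sqrt_nonneg (7/24 : ℝ)
  unfold aa; nlinarith
lemma aa_le4 : aa ≤ 1/4 := by
  have h := sqrt7
  have h2 := Real.sqrt_nonneg (7/24 : ℝ)
  unfold aa; nlinarith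
lemma aa_sq : aa ^ 2 = 1/24 - aa := by
  unfold aa; linear_combination sqrt7

lemma dist_coord (u v : Plane) :
    dist u v = Real.sqrt ((u 0 - v 0)^2 + (u 1 - v 1)^2) := by
  rw [EuclideanSpace.dist_eq]; simp [Fin.sum_univ_two, Real.dist_eq, sq_abs]

lemma iso_Γh (u v : Plane) : dist (Γh u) (Γh v) = dist u v := by
  rw [dist_coord, dist_coord]; simp only [Γh, pt0, pt1]; congr 1; ring
lemma iso_Γr (u v : Plane) : dist (Γr u) (Γr v) = dist u v := by
  rw [dist_coord, dist_coord]; simp only [Γr, pt0, pt1]; congr 1; ring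

lemma Γr4 (z : Plane) : Γr (Γr (Γr (Γr z))) = z := by
  simp only [Γr, pt0, pt1, sub_sub_cancel]; exact pt_eta z

lemma lip_affine (ρ : ℝ) (h0 : 0 ≤ ρ) (h : ρ ≤ 1/4) (c u v : Plane) :
    dist (ρ • u + c) (ρ • v + c) ≤ 1/4 * dist u v := by
  rw [dist_add_right, dist_smul₀, Real.norm_eq_abs, abs_of_nonneg h0]
  exact mul_le_mul_of_nonneg_right h dist_nonneg

end Aux8
end AuxSec

noncomputable section AuxSec2
namespace Aux8
def cc : ℕ → ℝ := fun i =>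
  if i = 1 then 0 else if i = 2 then aa else if i = 3 then 1/24 else if i = 4 then aa + 1/24 else if i = 5 then 2/24 else if i = 6 then aa + 2/24 else if i = 7 then 3/24 else if i = 8 then aa + 3/24 else if i = 9 then 4/24 else if i = 10 then aa + 4/24 else if i = 11 then 5/24 else if i = 12 then aa + 5/24 else if i = 13 then 1/4 else if i = 14 then 1 - (1/4) - (1/4) else if i = 15 then 1 - (aa + 5/24) - (aa^2) else if i = 16 then 1 - (5/24) - (aa) else if i = 17 then 1 - (aa + 4/24) - (aa^2) else if i = 18 then 1 - (4/24) - (aa) else if i = 19 then 1 - (aa + 3/24) - (aa^2) else if i = 20 then 1 - (3/24) - (aa) else if i = 21 then 1 - (aa + 2/24) - (aa^2) else if i = 22 then 1 - (2/24) - (aa) else if i = 23 then 1 - (aa + 1/24) - (aa^2) else if i = 24 then 1 - (1/24) - (aa) else if i = 25 then 1 - (aa) - (aa^2) else 1 - (0) - (aa)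
def rr : ℕ → ℝ := fun i =>
  if i = 1 then aa else if i = 2 then aa^2 else if i = 3 then aa else if i = 4 then aa^2 else if i = 5 then aa else if i = 6 then aa^2 else if i = 7 then aa else if i = 8 then aa^2 else if i = 9 then aa else if i = 10 then aa^2 else if i = 11 then aa else if i = 12 then aa^2 else if i = 13 then 1/4 else if i = 14 then 1/4 else if i = 15 then aa^2 else if i = 16 then aa else if i = 17 then aa^2 else if i = 18 then aa else if i = 19 then aa^2 else if i = 20 then aa else if i = 21 then aa^2 else if i = 22 then aa else if i = 23 then aa^2 else if i = 24 then aa else if i = 25 then aa^2 else aa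

lemma Fmap_low' (b : ℕ) (hb : b ≤ 26) (z : Plane) : Fmap b z = Fq b z := by
  simp only [Fmap, if_pos hb]

set_option maxHeartbeats 3000000 in
lemma eval26 (i : ℕ) (h1 : 1 ≤ i) (h2 : i ≤ 26) (t : ℝ) :
    Fmap i (pt t 0) = pt (rr i * t + cc i) 0 := by
  rw [Fmap_low' i h2]
  interval_cases i <;>
    norm_num [Fq, Fbase, Γh, cc, rr, smul_add_pt, pt0, pt1] <;> ring_nf

set_option maxHeartbeats 1000000 in
lemma bnds (i : ℕ) (h1 : 1 ≤ i) (h2 : i ≤ 26) :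
    0 < rr i ∧ 0 ≤ cc i ∧ cc i + rr i ≤ 1 := by
  interval_cases i <;> refine ⟨?_, ?_, ?_⟩ <;>
    norm_num [cc, rr] <;>
    nlinarith [aa_pos, aa_le4, aa_sq, mul_pos aa_pos aa_pos, sq_nonneg aa]

end Aux8
end AuxSec2

noncomputable section AuxSec3
namespace Aux8
open Set

set_option maxHeartbeats 1000000 in
lemma cover (s : ℝ) (hs0 : 0 ≤ s) (hs1 : s ≤ 1) :
    ∃ i, (1 ≤ i ∧ i ≤ 26) ∧ cc i ≤ s ∧ s ≤ cc i + rr i := by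
  rcases le_total s (aa) with h1|h1
  · exact ⟨1, by omega, by constructor <;> norm_num [cc, rr] <;> linarith [aa_pos, aa_le4, aa_sq]⟩
  rcases le_total s (1/24) with h2|h2
  · exact ⟨2, by omega, by constructor <;> norm_num [cc, rr] <;> linarith [aa_pos, aa_le4, aa_sq]⟩
  rcases le_total s ((1/24 + aa)) with h3|h3
  · exact ⟨3, by omega, by constructor <;> norm_num [cc, rr] <;> linarith [aa_pos, aa_le4, aa_sq]⟩
  rcases le_total s (2/24) with h4|h4
  · exact ⟨4, by omega, by constructor <;> norm_num [cc, rr] <;> linarith [aa_pos, aa_le4, aa_sq]⟩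
  rcases le_total s ((2/24 + aa)) with h5|h5
  · exact ⟨5, by omega, by constructor <;> norm_num [cc, rr] <;> linarith [aa_pos, aa_le4, aa_sq]⟩
  rcases le_total s (3/24) with h6|h6
  · exact ⟨6, by omega, by constructor <;> norm_num [cc, rr] <;> linarith [aa_pos, aa_le4, aa_sq]⟩
  rcases le_total s ((3/24 + aa)) with h7|h7
  · exact ⟨7, by omega, by constructor <;> norm_num [cc, rr] <;> linarith [aa_pos, aa_le4, aa_sq]⟩
  rcases le_total s (4/24) with h8|h8
  · exact ⟨8, by omega, by constructor <;> norm_num [cc, rr] <;> linarith [aa_pos, aa_le4, aa_sq]⟩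
  rcases le_total s ((4/24 + aa)) with h9|h9
  · exact ⟨9, by omega, by constructor <;> norm_num [cc, rr] <;> linarith [aa_pos, aa_le4, aa_sq]⟩
  rcases le_total s (5/24) with h10|h10
  · exact ⟨10, by omega, by constructor <;> norm_num [cc, rr] <;> linarith [aa_pos, aa_le4, aa_sq]⟩
  rcases le_total s ((5/24 + aa)) with h11|h11
  · exact ⟨11, by omega, by constructor <;> norm_num [cc, rr] <;> linarith [aa_pos, aa_le4, aa_sq]⟩
  rcases le_total s (6/24) with h12|h12
  · exact ⟨12, by omega, by constructor <;> norm_num [cc, rr] <;> linarith [aa_pos, aa_le4, aa_sq]⟩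
  rcases le_total s (1/2) with h13|h13
  · exact ⟨13, by omega, by constructor <;> norm_num [cc, rr] <;> linarith [aa_pos, aa_le4, aa_sq]⟩
  rcases le_total s (3/4) with h14|h14
  · exact ⟨14, by omega, by constructor <;> norm_num [cc, rr] <;> linarith [aa_pos, aa_le4, aa_sq]⟩
  rcases le_total s ((1 - (aa + 5/24))) with h15|h15
  · exact ⟨15, by omega, by constructor <;> norm_num [cc, rr] <;> linarith [aa_pos, aa_le4, aa_sq]⟩
  rcases le_total s ((1 - (5/24))) with h16|h16
  · exact ⟨16, by omega, by constructor <;> norm_num [cc, rr] <;> linarith [aa_pos, aa_le4, aa_sq]⟩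
  rcases le_total s ((1 - (aa + 4/24))) with h17|h17
  · exact ⟨17, by omega, by constructor <;> norm_num [cc, rr] <;> linarith [aa_pos, aa_le4, aa_sq]⟩
  rcases le_total s ((1 - (4/24))) with h18|h18
  · exact ⟨18, by omega, by constructor <;> norm_num [cc, rr] <;> linarith [aa_pos, aa_le4, aa_sq]⟩
  rcases le_total s ((1 - (aa + 3/24))) with h19|h19
  · exact ⟨19, by omega, by constructor <;> norm_num [cc, rr] <;> linarith [aa_pos, aa_le4, aa_sq]⟩
  rcases le_total s ((1 - (3/24))) with h20|h20
  · exact ⟨20, by omega, by constructor <;> norm_num [cc, rr] <;> linarith [aa_pos, aa_le4, aa_sq]⟩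
  rcases le_total s ((1 - (aa + 2/24))) with h21|h21
  · exact ⟨21, by omega, by constructor <;> norm_num [cc, rr] <;> linarith [aa_pos, aa_le4, aa_sq]⟩
  rcases le_total s ((1 - (2/24))) with h22|h22
  · exact ⟨22, by omega, by constructor <;> norm_num [cc, rr] <;> linarith [aa_pos, aa_le4, aa_sq]⟩
  rcases le_total s ((1 - (aa + 1/24))) with h23|h23
  · exact ⟨23, by omega, by constructor <;> norm_num [cc, rr] <;> linarith [aa_pos, aa_le4, aa_sq]⟩
  rcases le_total s ((1 - (1/24))) with h24|h24
  · exact ⟨24, by omega, by constructor <;> norm_num [cc, rr] <;> linarith [aa_pos, aa_le4, aa_sq]⟩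
  rcases le_total s ((1 - (aa))) with h25|h25
  · exact ⟨25, by omega, by constructor <;> norm_num [cc, rr] <;> linarith [aa_pos, aa_le4, aa_sq]⟩
  · exact ⟨26, by omega, by constructor <;> norm_num [cc, rr] <;> linarith [aa_pos, aa_le4, aa_sq]⟩

lemma bottom_eq : bottomE = ⋃ i ∈ Finset.Icc 1 26, Fmap i '' bottomE := by
  ext z
  constructor
  · intro hz
    obtain ⟨⟨hz0, hz1⟩, hz2⟩ := hz
    obtain ⟨i, ⟨hi1, hi2⟩, hc1, hc2⟩ := cover (z 0) hz0 hz1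
    have hr := bnds i hi1 hi2
    refine Set.mem_biUnion (Finset.mem_Icc.mpr ⟨hi1, hi2⟩) ?_
    refine ⟨pt ((z 0 - cc i) / rr i) 0, ⟨⟨?_, ?_⟩, pt1 _ _⟩, ?_⟩
    · rw [pt0]; exact div_nonneg (by linarith) (le_of_lt hr.1)
    · rw [pt0, div_le_one hr.1]; linarith
    · rw [eval26 i hi1 hi2, mul_div_cancel₀ _ (ne_of_gt hr.1), sub_add_cancel]
      conv_rhs => rw [← pt_eta z]
      rw [hz2]
  · intro hz
    simp only [Set.mem_iUnion] at hz
    obtain ⟨i, hi, y, hy, rfl⟩ := hz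
    rw [Finset.mem_Icc] at hi
    obtain ⟨⟨hy0, hy1⟩, hy2⟩ := hy
    have hy' : y = pt (y 0) 0 := by rw [← hy2, pt_eta]
    rw [hy', eval26 i hi.1 hi.2]
    have hr := bnds i hi.1 hi.2
    refine ⟨⟨?_, ?_⟩, pt1 _ _⟩ <;> rw [pt0]
    · nlinarith [hr.1, hr.2.1]
    · nlinarith [hr.1, hr.2.1, hr.2.2]

end Aux8
end AuxSec3

noncomputable section AuxSec4
namespace Aux8
open Set

lemma it1' (w : Plane) : Γr^[1] w = Γr w := rfl
lemma it2 (w : Plane) : Γr^[2] w = Γr (Γr w) := rfl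
lemma it3 (w : Plane) : Γr^[3] w = Γr (Γr (Γr w)) := rfl
lemma Γr43 (z : Plane) : Γr (Γr (Γr (Γr z))) = z := Γr4 z

lemma core (w : Plane) : Fq 26 w = Γr (Fq 1 (Γr (Γr (Γr w)))) := by
  norm_num [Fq, Fbase, Γh, Γr, smul_add_pt, pt0, pt1]
  try ring_nf

lemma Fmap_rot (b j : ℕ) (hb1 : 1 ≤ b) (hb : b ≤ 25) (hj : 1 ≤ j) (hj3 : j ≤ 3)
    (z : Plane) : Fmap (b + 25 * j) z = Γr^[j] (Fq b (Γr^[4 - j] z)) := by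
  by_cases h26 : b + 25 * j ≤ 26
  · have hb' : b = 1 := by omega
    have hj' : j = 1 := by omega
    subst hb' hj'
    have : Fmap (1 + 25 * 1) z = Fq 26 z := by norm_num [Fmap]
    rw [this, core, it1']
    rfl
  · have h100 : b + 25 * j ≤ 100 := by omega
    have e1 : (b + 25 * j - 1) / 25 = j := by omega
    have e2 : b + 25 * j - 25 * j = b := by omega
    simp only [Fmap, if_neg h26, if_pos h100, e1, e2, Function.comp_apply]

lemma Fmap_low (b : ℕ) (hb : b ≤ 26) (z : Plane) : Fmap b z = Fq b z := by
  simp only [Fmap, if_pos hb]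

def nxt : ℕ → ℕ := fun i =>
  if i ≤ 75 then i + 25 else if i ≤ 100 then i - 75 else if i ≤ 103 then i + 1 else 101

lemma nxt_mem (i : ℕ) (h1 : 1 ≤ i) (h2 : i ≤ 104) : 1 ≤ nxt i ∧ nxt i ≤ 104 := by
  simp only [nxt]; split <;> [omega; (split <;> [omega; (split <;> omega)])]

lemma step (i : ℕ) (h1 : 1 ≤ i) (h2 : i ≤ 104) (z : Plane) :
    Γr (Fmap i z) = Fmap (nxt i) (Γr z) := by
  by_cases hc : i ≤ 100
  · obtain ⟨b, j, hb1, hb25, hj3, rfl⟩ :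
        ∃ b j, 1 ≤ b ∧ b ≤ 25 ∧ j ≤ 3 ∧ i = b + 25 * j :=
      ⟨i - 25 * ((i - 1) / 25), (i - 1) / 25, by omega, by omega, by omega, by omega⟩
    interval_cases j
    · have hn : nxt (b + 25 * 0) = b + 25 * 1 := by unfold nxt; rw [if_pos (by omega)]; try omega
      rw [hn, show b + 25 * 0 = b from by omega, Fmap_low b (by omega),
        Fmap_rot b 1 hb1 hb25 le_rfl (by omega), it1']
      show _ = Γr (Fq b (Γr^[3] (Γr z)))
      rw [it3, Γr43]
    · have hn : nxt (b + 25 * 1) = b + 25 * 2 := by unfold nxt; rw [if_pos (by omega)]; try omega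
      rw [hn, Fmap_rot b 1 hb1 hb25 le_rfl (by omega),
        Fmap_rot b 2 hb1 hb25 (by omega) (by omega)]
      rfl
    · have hn : nxt (b + 25 * 2) = b + 25 * 3 := by unfold nxt; rw [if_pos (by omega)]; try omega
      rw [hn, Fmap_rot b 2 hb1 hb25 (by omega) (by omega),
        Fmap_rot b 3 hb1 hb25 (by omega) (by omega)]
      rfl
    · have hn : nxt (b + 25 * 3) = b := by
        unfold nxt; rw [if_neg (by omega), if_pos (by omega)]; try omega
      rw [hn, Fmap_rot b 3 hb1 hb25 (by omega) (by omega), Fmap_low b (by omega), it3]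
      show Γr (Γr (Γr (Γr (Fq b (Γr^[4-3] z))))) = _
      rw [Γr43, it1']
  · interval_cases i <;>
      · norm_num [Fmap, nxt, Γr, smul_add_pt, pt0, pt1]
        try ring_nf
end Aux8
end AuxSec4

noncomputable section AuxSec5
namespace Aux8
open Set Metric

lemma aasq_le : aa ^ 2 ≤ 1/4 := by nlinarith [aa_sq, aa_pos, aa_le4]

lemma lip13 (i : ℕ) (h2 : i ≤ 13) :
    ∀ u v, dist (Fbase i u) (Fbase i v) ≤ 1/4 * dist u v := by
  intro u v
  by_cases h13 : i = 13
  · simp only [Fbase, if_pos h13]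
    exact lip_affine (1/4) (by norm_num) le_rfl _ u v
  by_cases hodd : i % 2 = 1
  · simp only [Fbase, if_neg h13, if_pos hodd]
    exact lip_affine aa aa_pos.le aa_le4 _ u v
  · simp only [Fbase, if_neg h13, if_neg hodd]
    exact lip_affine (aa ^ 2) (sq_nonneg aa) aasq_le _ u v

lemma lip26 (i : ℕ) (h1 : 1 ≤ i) (h2 : i ≤ 26) :
    ∀ u v, dist (Fmap i u) (Fmap i v) ≤ 1/4 * dist u v := by
  intro u v
  rw [Fmap_low i h2, Fmap_low i h2]
  by_cases h13 : i ≤ 13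
  · simp only [Fq, if_pos h13]; exact lip13 i h13 u v
  · simp only [Fq, if_neg h13, Function.comp_apply]
    rw [iso_Γh]
    calc dist (Fbase (27 - i) (Γh u)) (Fbase (27 - i) (Γh v))
        ≤ 1/4 * dist (Γh u) (Γh v) := lip13 (27 - i) (by omega) _ _
      _ = 1/4 * dist u v := by rw [iso_Γh]

def Lip (i : ℕ) : Prop := ∀ u v, dist (Fmap i u) (Fmap i v) ≤ 1/4 * dist u v

lemma lip_nxt (i : ℕ) (h1 : 1 ≤ i) (h2 : i ≤ 104) (h : Lip i) : Lip (nxt i) := by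
  intro u v
  have e : ∀ w : Plane, Fmap (nxt i) w = Γr (Fmap i (Γr (Γr (Γr w)))) := by
    intro w
    conv_lhs => rw [← Γr43 w]
    rw [← step i h1 h2]
  rw [e u, e v, iso_Γr]
  have h' := h (Γr (Γr (Γr u))) (Γr (Γr (Γr v)))
  rwa [iso_Γr, iso_Γr, iso_Γr] at h'

def Good (E : Set Plane) : Prop :=
  ∀ x ∈ E, ∃ i, (1 ≤ i ∧ i ≤ 104) ∧ Lip i ∧ ∃ y ∈ E, Fmap i y = x

lemma good_rot (E : Set Plane) (h : Good E) : Good (Γr '' E) := by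
  rintro x ⟨x', hx', rfl⟩
  obtain ⟨i, ⟨h1, h2⟩, hL, y, hy, hyx⟩ := h x' hx'
  exact ⟨nxt i, nxt_mem i h1 h2, lip_nxt i h1 h2 hL, Γr y, ⟨y, hy, rfl⟩,
    by rw [← step i h1 h2, hyx]⟩

lemma good_bottom : Good bottomE := by
  intro x hx
  rw [bottom_eq] at hx
  simp only [Set.mem_iUnion] at hx
  obtain ⟨i, hi, y, hy, hyx⟩ := hx
  rw [Finset.mem_Icc] at hi
  exact ⟨i, ⟨hi.1, by omega⟩, lip26 i hi.1 hi.2, y, hy, hyx⟩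

lemma good_sub (K : Set Plane) (hne : K.Nonempty) (hcomp : IsCompact K)
    (hK : K = ⋃ i ∈ Finset.Icc 1 104, Fmap i '' K)
    (E : Set Plane) (hEne : E.Nonempty) (hEc : IsCompact E) (hG : Good E) : E ⊆ K := by
  have hFK : ∀ i, 1 ≤ i → i ≤ 104 → ∀ z ∈ K, Fmap i z ∈ K := by
    intro i hi1 hi2 z hz
    have : Fmap i z ∈ ⋃ j ∈ Finset.Icc 1 104, Fmap j '' K :=
      Set.mem_biUnion (Finset.mem_Icc.mpr ⟨hi1, hi2⟩) (Set.mem_image_of_mem _ hz)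
    rwa [← hK] at this
  have cont : Continuous fun x : Plane => infDist x K := continuous_infDist_pt K
  obtain ⟨x₀, hx₀E, hmax⟩ := hEc.exists_isMaxOn hEne cont.continuousOn
  have hd0 : infDist x₀ K ≤ 0 := by
    obtain ⟨i, ⟨hi1, hi2⟩, hLip, y, hyE, hyx⟩ := hG x₀ hx₀E
    obtain ⟨z, hzK, hdz⟩ := hcomp.exists_infDist_eq_dist hne y
    have h1 : infDist x₀ K ≤ dist x₀ (Fmap i z) :=
      infDist_le_dist_of_mem (hFK i hi1 hi2 z hzK)
    have h2 : dist x₀ (Fmap i z) ≤ 1/4 * dist y z := by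
      rw [← hyx]; exact hLip y z
    have h4 : infDist y K ≤ infDist x₀ K := hmax hyE
    have h5 : 0 ≤ infDist x₀ K := infDist_nonneg
    linarith [hdz ▸ h4]
  intro x hxE
  have : infDist x K = 0 :=
    le_antisymm (le_trans (hmax hxE) hd0) infDist_nonneg
  exact ((hcomp.isClosed.mem_iff_infDist_zero hne).mpr this)

lemma Γr_pt (s t : ℝ) : Γr (pt s t) = pt (1 - t) s := by simp [Γr, pt0, pt1]

lemma cont_pt0 : Continuous fun s : ℝ => pt s 0 := by
  have h : (fun s : ℝ => pt s 0) = fun s : ℝ => s • (pt 1 0 : Plane) := by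
    funext s; ext i; fin_cases i <;> simp [pt, PiLp.smul_apply]
  rw [h]; exact continuous_id.smul continuous_const

lemma bottom_im : bottomE = (fun s : ℝ => pt s 0) '' Icc 0 1 := by
  ext z; constructor
  · rintro ⟨hz0, hz1⟩
    refine ⟨z 0, hz0, ?_⟩
    show pt (z 0) 0 = z
    rw [← hz1]; exact pt_eta z
  · rintro ⟨s, hs, rfl⟩
    refine ⟨?_, ?_⟩
    · show pt s 0 0 ∈ Icc (0:ℝ) 1
      rwa [pt0]
    · exact pt1 s 0

lemma bottom_compact : IsCompact bottomE := by
  rw [bottom_im]; exact isCompact_Icc.image cont_pt0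

lemma bottom_ne : bottomE.Nonempty :=
  ⟨pt 0 0, ⟨by rw [pt0]; norm_num, pt1 _ _⟩⟩

lemma Γr_cont : Continuous Γr := (Isometry.of_dist_eq iso_Γr).continuous

lemma right_im : rightE = Γr '' bottomE := by
  ext z; constructor
  · rintro ⟨hz0, hz1⟩
    refine ⟨pt (z 1) 0, ⟨by rwa [pt0], pt1 _ _⟩, ?_⟩
    have h : Γr (pt (z 1) 0) = pt 1 (z 1) := by rw [Γr_pt]; norm_num
    rw [h, ← hz0, pt_eta]
  · rintro ⟨w, ⟨hw0, hw1⟩, rfl⟩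
    refine ⟨?_, ?_⟩
    · simp [Γr, pt0, hw1]
    · simpa [Γr, pt1] using hw0

lemma top_im : topE = Γr '' rightE := by
  ext z; constructor
  · rintro ⟨hz0, hz1⟩
    refine ⟨pt 1 (1 - z 0), ⟨pt0 _ _, by rw [pt1]; exact ⟨by linarith [hz0.2], by linarith [hz0.1]⟩⟩, ?_⟩
    have h : Γr (pt 1 (1 - z 0)) = pt (z 0) 1 := by rw [Γr_pt]; ring_nf
    rw [h, ← hz1, pt_eta]
  · rintro ⟨w, ⟨hw0, hw1⟩, rfl⟩
    refine ⟨?_, ?_⟩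
    · have : Γr w 0 = 1 - w 1 := by simp [Γr, pt0]
      rw [this]; exact ⟨by linarith [hw1.2], by linarith [hw1.1]⟩
    · simpa [Γr, pt1] using hw0

lemma left_im : leftE = Γr '' topE := by
  ext z; constructor
  · rintro ⟨hz0, hz1⟩
    refine ⟨pt (z 1) 1, ⟨by rwa [pt0], pt1 _ _⟩, ?_⟩
    have h : Γr (pt (z 1) 1) = pt 0 (z 1) := by rw [Γr_pt]; norm_num
    rw [h, ← hz0, pt_eta]
  · rintro ⟨w, ⟨hw0, hw1⟩, rfl⟩
    refine ⟨?_, ?_⟩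
    · simp [Γr, pt0, hw1]
    · simpa [Γr, pt1] using hw0

end Aux8
end AuxSec5


/-- Each of the four edges of the unit square is contained in the attractor K; the
    bottom edge satisfies [0,1]×{0} = ⋃_{i=1}^{26} F_i([0,1]×{0}), hence lies in K,
    and by symmetry so do the other three edges. -/
theorem stmt8 (K : Set Plane) (hne : K.Nonempty) (hcomp : IsCompact K)
    (hK : K = ⋃ i ∈ Finset.Icc 1 104, Fmap i '' K) :
    bottomE = ⋃ i ∈ Finset.Icc 1 26, Fmap i '' bottomE ∧
    bottomE ⊆ K ∧ rightE ⊆ K ∧ topE ⊆ K ∧ leftE ⊆ K := by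
  have hsub := Aux8.good_sub K hne hcomp hK
  have hBc := Aux8.bottom_compact
  have hBne := Aux8.bottom_ne
  have hgb := Aux8.good_bottom
  refine ⟨Aux8.bottom_eq, hsub _ hBne hBc hgb, ?_, ?_, ?_⟩
  · rw [Aux8.right_im]
    exact hsub _ (hBne.image _) (hBc.image Aux8.Γr_cont) (Aux8.good_rot _ hgb)
  · rw [Aux8.top_im, Aux8.right_im]
    exact hsub _ ((hBne.image _).image _) ((hBc.image Aux8.Γr_cont).image Aux8.Γr_cont)
      (Aux8.good_rot _ (Aux8.good_rot _ hgb))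
  · rw [Aux8.left_im, Aux8.top_im, Aux8.right_im]
    exact hsub _ (((hBne.image _).image _).image _)
      (((hBc.image Aux8.Γr_cont).image Aux8.Γr_cont).image Aux8.Γr_cont)
      (Aux8.good_rot _ (Aux8.good_rot _ (Aux8.good_rot _ hgb)))
end
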